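/- arXiv:1412.2359 — 3 statements merged into one kernel-verified Lean document; each statement's English description precedes it below -/
import Mathlib

section
/- Let H be a Hopf algebra over a field k, I ⊆ H a coideal right ideal, and B := H^{co H/I} the subalgebra of coaction invariants of the canonical right H/I-coaction ρ(h) = h(1) ⊗ π(h(2)) on H. Then the homogeneous H/I-extension B ⊆ H is Galois (i.e. the canonical map can: H ⊗_B H → H ⊗ H/I, h ⊗_B h' ↦ h h'(1) ⊗ π(h'(2)), is bijective) if and only if I = B⁺H, where B⁺ := B ∩ ker ε. -/
/-!
STATEMENT 0:  Let `H` be a Hopf algebra over a field `k`, `I ⊆ H` a coideal right ideal and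
`B := H^{co H/I}` the subalgebra of coaction invariants of the canonical right `H/I`-coaction
`ρ(h) = h₍₁₎ ⊗ π(h₍₂₎)` on `H`.  Then the homogeneous `H/I`-extension `B ⊆ H` is Galois, i.e. the
canonical map `can : H ⊗_B H → H ⊗ H/I`, `h ⊗_B h' ↦ h h'₍₁₎ ⊗ π(h'₍₂₎)`, is bijective, if and
only if `I = B⁺H` where `B⁺ = B ∩ ker ε`.

`H ⊗_B H` is realised as the quotient of `H ⊗[k] H` by the span of the elements
`(g b) ⊗ g' - g ⊗ (b g')` with `b ∈ B`, and "can is bijective" as the existence of a linear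
equivalence `(H ⊗[k] H)/rel ≃ H ⊗ H/I` through which the representative-level canonical map
factors.
-/

open TensorProduct

noncomputable section

variable (k : Type*) [Field k] (H : Type*) [Ring H] [HopfAlgebra k H]

/-- `I` is a coideal right ideal of `H`. -/
def IsCoidealRightIdeal (I : Submodule k H) : Prop :=
  (∀ x ∈ I, ∀ h : H, x * h ∈ I) ∧
  (∀ x ∈ I, Coalgebra.counit (R := k) x = (0 : k)) ∧
  (∀ x ∈ I, Coalgebra.comul (R := k) x ∈
    LinearMap.range (TensorProduct.map I.subtype (LinearMap.id (M := H))) ⊔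
      LinearMap.range (TensorProduct.map (LinearMap.id (M := H)) I.subtype))

/-- `b ∈ B = H^{co H/I}`:  `b₍₁₎ ⊗ π(b₍₂₎) = b ⊗ π(1)`. -/
def IsCoinvariant (I : Submodule k H) (b : H) : Prop :=
  (LinearMap.lTensor H I.mkQ) (Coalgebra.comul (R := k) b) = b ⊗ₜ[k] I.mkQ 1

/-- The subspace of `H ⊗ H` of relations defining `H ⊗_B H`. -/
def relB (I : Submodule k H) : Submodule k (H ⊗[k] H) :=
  Submodule.span k
    {x : H ⊗[k] H | ∃ g g' b : H, IsCoinvariant k H I b ∧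
      x = (g * b) ⊗ₜ[k] g' - g ⊗ₜ[k] (b * g')}

/-- The representative-level canonical map `H ⊗ H → H ⊗ H/I`, `h ⊗ h' ↦ h h'₍₁₎ ⊗ π(h'₍₂₎)`. -/
def canTilde (I : Submodule k H) : H ⊗[k] H →ₗ[k] H ⊗[k] (H ⧸ I) :=
  (LinearMap.rTensor (H ⧸ I) (LinearMap.mul' k H)).comp
    (((TensorProduct.assoc k H H (H ⧸ I)).symm.toLinearMap).comp
      (LinearMap.lTensor H ((LinearMap.lTensor H I.mkQ).comp (Coalgebra.comul (R := k)))))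

/-- The subspace `B⁺H`, spanned by products `b h` with `b ∈ B`, `ε(b) = 0`. -/
def BplusH (I : Submodule k H) : Submodule k H :=
  Submodule.span k
    {x : H | ∃ b h : H, IsCoinvariant k H I b ∧ Coalgebra.counit (R := k) b = (0 : k) ∧
      x = b * h}

end


set_option maxHeartbeats 1000000
set_option synthInstance.maxHeartbeats 1000000

noncomputable section GaloisAux

open Coalgebra HopfAlgebra LinearMap

variable {k : Type*} [Field k] {H : Type*} [Ring H] [HopfAlgebra k H]

local notation "𝒮" => HopfAlgebra.antipode (R := k) (A := H)
local notation "ε" => Coalgebra.counit (R := k)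

lemma sum_counit_smul_right {a : H} {ι : Type*} (r : Repr k a ι) :
    ∑ i ∈ r.index, counit (R := k) (r.left i) • r.right i = a := by
  have h := sum_counit_tmul_eq r
  apply_fun (TensorProduct.lid k H) at h
  simpa only [map_sum, TensorProduct.lid_tmul, one_smul] using h

lemma sum_smul_counit_left {a : H} {ι : Type*} (r : Repr k a ι) :
    ∑ i ∈ r.index, counit (R := k) (r.right i) • r.left i = a := by
  have h := sum_tmul_counit_eq r
  apply_fun (TensorProduct.rid k H) at h
  simpa only [map_sum, TensorProduct.rid_tmul, one_smul] using h

lemma triple_eq {W : Type*} [AddCommGroup W] [Module k W] {a : H} {ι κ Λ : Type*} (ra : Repr k a ι)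
    (ra1 : ∀ i : ι, Repr k (ra.left i) κ) (ra2 : ∀ i : ι, Repr k (ra.right i) Λ)
    (M : H ⊗[k] (H ⊗[k] H) →ₗ[k] W) :
    (∑ i ∈ ra.index, ∑ j ∈ (ra1 i).index,
        M ((ra1 i).left j ⊗ₜ[k] ((ra1 i).right j ⊗ₜ[k] ra.right i))) =
    ∑ i ∈ ra.index, ∑ j ∈ (ra2 i).index,
        M (ra.left i ⊗ₜ[k] ((ra2 i).left j ⊗ₜ[k] (ra2 i).right j)) := by
  have h := sum_tmul_tmul_eq ra ra1 ra2
  apply_fun M at h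
  simpa [map_sum] using h

def mulRepr {a b : H} {ι κ : Type*} (ra : Repr k a ι) (rb : Repr k b κ) :
    Repr k (a * b) (ι × κ) where
  index := ra.index ×ˢ rb.index
  left := fun p => ra.left p.1 * rb.left p.2
  right := fun p => ra.right p.1 * rb.right p.2
  eq := by
    rw [Finset.sum_product, Bialgebra.comul_mul, ← ra.eq, ← rb.eq, Finset.sum_mul_sum]
    simp [Algebra.TensorProduct.tmul_mul_tmul]

def mu3 : H ⊗[k] (H ⊗[k] H) →ₗ[k] H := (mul' k H) ∘ₗ lTensor H (mul' k H)

@[simp] lemma mu3_tmul (x y z : H) : (mu3 (x ⊗ₜ[k] (y ⊗ₜ[k] z)) : H) = x * (y * z) := by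
  simp [mu3, mul'_apply]

lemma helper1 {ι : Type*} (s : Finset ι) (C x w : H) (y z : ι → H) :
    ∑ v ∈ s, C * ((x * y v) * (z v * w)) = C * ((x * ∑ v ∈ s, y v * z v) * w) := by
  rw [Finset.mul_sum, Finset.sum_mul, Finset.mul_sum]
  exact Finset.sum_congr rfl fun v _ => by simp [mul_assoc]

lemma sum4_comm {M : Type*} [AddCommMonoid M] {ι κ : Type*} {ι' : ι → Type*} {κ' : κ → Type*}
    (s : Finset ι) (s' : ∀ i, Finset (ι' i)) (t : Finset κ) (t' : ∀ j, Finset (κ' j))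
    (f : (i : ι) → ι' i → (j : κ) → κ' j → M) :
    (∑ i ∈ s, ∑ u ∈ s' i, ∑ j ∈ t, ∑ v ∈ t' j, f i u j v)
      = ∑ j ∈ t, ∑ v ∈ t' j, ∑ i ∈ s, ∑ u ∈ s' i, f i u j v := by
  calc (∑ i ∈ s, ∑ u ∈ s' i, ∑ j ∈ t, ∑ v ∈ t' j, f i u j v)
      = ∑ i ∈ s, ∑ j ∈ t, ∑ u ∈ s' i, ∑ v ∈ t' j, f i u j v :=
        Finset.sum_congr rfl fun i _ => Finset.sum_comm
    _ = ∑ j ∈ t, ∑ i ∈ s, ∑ u ∈ s' i, ∑ v ∈ t' j, f i u j v := Finset.sum_comm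
    _ = ∑ j ∈ t, ∑ i ∈ s, ∑ v ∈ t' j, ∑ u ∈ s' i, f i u j v :=
        Finset.sum_congr rfl fun j _ => Finset.sum_congr rfl fun i _ => Finset.sum_comm
    _ = ∑ j ∈ t, ∑ v ∈ t' j, ∑ i ∈ s, ∑ u ∈ s' i, f i u j v :=
        Finset.sum_congr rfl fun j _ => Finset.sum_comm

lemma antipode_mul (a b : H) : 𝒮 (a * b) = 𝒮 b * 𝒮 a := by
  classical
  let ra := ℛ k a; let rb := ℛ k b
  let a1 : ∀ i : ra.ι, Repr k (ra.left i) (H × H) := fun i => ℛ k (ra.left i)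
  let a2 : ∀ i : ra.ι, Repr k (ra.right i) (H × H) := fun i => ℛ k (ra.right i)
  let b1 : ∀ j : rb.ι, Repr k (rb.left j) (H × H) := fun j => ℛ k (rb.left j)
  let b2 : ∀ j : rb.ι, Repr k (rb.right j) (H × H) := fun j => ℛ k (rb.right j)
  have way1 : (∑ i ∈ ra.index, ∑ u ∈ (a2 i).index, ∑ j ∈ rb.index, ∑ v ∈ (b2 j).index,
      𝒮 (ra.left i * rb.left j) * (((a2 i).left u * (b2 j).left v) *
        (𝒮 ((b2 j).right v) * 𝒮 ((a2 i).right u)))) = 𝒮 (a * b) := by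
    calc (∑ i ∈ ra.index, ∑ u ∈ (a2 i).index, ∑ j ∈ rb.index, ∑ v ∈ (b2 j).index,
        𝒮 (ra.left i * rb.left j) * (((a2 i).left u * (b2 j).left v) *
          (𝒮 ((b2 j).right v) * 𝒮 ((a2 i).right u))))
        = ∑ i ∈ ra.index, ∑ u ∈ (a2 i).index, ∑ j ∈ rb.index,
            𝒮 (ra.left i * rb.left j) * (((a2 i).left u *
              (∑ v ∈ (b2 j).index, (b2 j).left v * 𝒮 ((b2 j).right v))) * 𝒮 ((a2 i).right u)) := by
          refine Finset.sum_congr rfl fun i _ => Finset.sum_congr rfl fun u _ =>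
            Finset.sum_congr rfl fun j _ => ?_
          exact helper1 _ _ _ _ _ _
      _ = ∑ i ∈ ra.index, ∑ u ∈ (a2 i).index, ∑ j ∈ rb.index,
            ε (rb.right j) • (𝒮 (ra.left i * rb.left j) *
              ((a2 i).left u * 𝒮 ((a2 i).right u))) := by
          refine Finset.sum_congr rfl fun i _ => Finset.sum_congr rfl fun u _ =>
            Finset.sum_congr rfl fun j _ => ?_
          rw [sum_mul_antipode_eq_smul (b2 j)]
          simp [Algebra.mul_smul_comm, Algebra.smul_mul_assoc]
      _ = ∑ i ∈ ra.index, ∑ j ∈ rb.index,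
            ε (rb.right j) • (𝒮 (ra.left i * rb.left j) *
              (∑ u ∈ (a2 i).index, (a2 i).left u * 𝒮 ((a2 i).right u))) := by
          refine Finset.sum_congr rfl fun i _ => ?_
          rw [Finset.sum_comm]
          refine Finset.sum_congr rfl fun j _ => ?_
          rw [← Finset.smul_sum, ← Finset.mul_sum]
      _ = ∑ i ∈ ra.index, ∑ j ∈ rb.index,
            (ε (ra.right i) * ε (rb.right j)) • 𝒮 (ra.left i * rb.left j) := by
          refine Finset.sum_congr rfl fun i _ => Finset.sum_congr rfl fun j _ => ?_
          rw [sum_mul_antipode_eq_smul (a2 i)]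
          rw [Algebra.mul_smul_comm, mul_one, smul_smul, mul_comm]
      _ = 𝒮 (a * b) := by
          conv_rhs => rw [← sum_smul_counit_left ra, ← sum_smul_counit_left rb]
          rw [Finset.sum_mul_sum, map_sum]
          refine Finset.sum_congr rfl fun i _ => ?_
          rw [map_sum]
          refine Finset.sum_congr rfl fun j _ => ?_
          rw [smul_mul_assoc, Algebra.mul_smul_comm, map_smul, map_smul, smul_smul]
  have way2 : (∑ i ∈ ra.index, ∑ u ∈ (a2 i).index, ∑ j ∈ rb.index, ∑ v ∈ (b2 j).index,
      𝒮 (ra.left i * rb.left j) * (((a2 i).left u * (b2 j).left v) *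
        (𝒮 ((b2 j).right v) * 𝒮 ((a2 i).right u)))) = 𝒮 b * 𝒮 a := by
    calc (∑ i ∈ ra.index, ∑ u ∈ (a2 i).index, ∑ j ∈ rb.index, ∑ v ∈ (b2 j).index,
        𝒮 (ra.left i * rb.left j) * (((a2 i).left u * (b2 j).left v) *
          (𝒮 ((b2 j).right v) * 𝒮 ((a2 i).right u))))
        = ∑ j ∈ rb.index, ∑ v ∈ (b2 j).index, ∑ i ∈ ra.index, ∑ u ∈ (a2 i).index,
            𝒮 (ra.left i * rb.left j) * (((a2 i).left u * (b2 j).left v) *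
              (𝒮 ((b2 j).right v) * 𝒮 ((a2 i).right u))) := by
          exact sum4_comm _ _ _ _ _
      _ = ∑ j ∈ rb.index, ∑ v ∈ (b2 j).index, ∑ i ∈ ra.index, ∑ u ∈ (a1 i).index,
            𝒮 ((a1 i).left u * rb.left j) * (((a1 i).right u * (b2 j).left v) *
              (𝒮 ((b2 j).right v) * 𝒮 (ra.right i))) := by
          refine Finset.sum_congr rfl fun j _ => Finset.sum_congr rfl fun v _ => ?_
          have t := triple_eq ra a1 a2 (mu3 ∘ₗ TensorProduct.map
            ((𝒮 : H →ₗ[k] H) ∘ₗ mulRight k (rb.left j)) (TensorProduct.map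
              (mulRight k ((b2 j).left v))
              ((mulLeft k (𝒮 ((b2 j).right v))) ∘ₗ (𝒮 : H →ₗ[k] H))))
          simpa only [coe_comp, Function.comp_apply, TensorProduct.map_tmul, mu3_tmul,
            mulRight_apply, mulLeft_apply] using t.symm
      _ = ∑ i ∈ ra.index, ∑ u ∈ (a1 i).index, ∑ j ∈ rb.index, ∑ v ∈ (b2 j).index,
            𝒮 ((a1 i).left u * rb.left j) * (((a1 i).right u * (b2 j).left v) *
              (𝒮 ((b2 j).right v) * 𝒮 (ra.right i))) := by
          exact sum4_comm _ _ _ _ _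
      _ = ∑ i ∈ ra.index, ∑ u ∈ (a1 i).index, ∑ j ∈ rb.index, ∑ v ∈ (b1 j).index,
            𝒮 ((a1 i).left u * (b1 j).left v) * (((a1 i).right u * (b1 j).right v) *
              (𝒮 (rb.right j) * 𝒮 (ra.right i))) := by
          refine Finset.sum_congr rfl fun i _ => Finset.sum_congr rfl fun u _ => ?_
          have t := triple_eq rb b1 b2 (mu3 ∘ₗ TensorProduct.map
            ((𝒮 : H →ₗ[k] H) ∘ₗ mulLeft k ((a1 i).left u)) (TensorProduct.map
              (mulLeft k ((a1 i).right u))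
              ((mulRight k (𝒮 (ra.right i))) ∘ₗ (𝒮 : H →ₗ[k] H))))
          simpa only [coe_comp, Function.comp_apply, TensorProduct.map_tmul, mu3_tmul,
            mulRight_apply, mulLeft_apply] using t.symm
      _ = ∑ i ∈ ra.index, ∑ j ∈ rb.index,
            (ε (ra.left i) * ε (rb.left j)) • (𝒮 (rb.right j) * 𝒮 (ra.right i)) := by
          refine Finset.sum_congr rfl fun i _ => ?_
          rw [Finset.sum_comm]
          refine Finset.sum_congr rfl fun j _ => ?_
          have hij := sum_antipode_mul_eq_smul (R := k) (mulRepr (a1 i) (b1 j))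
          simp only [mulRepr, Finset.sum_product] at hij
          calc ∑ u ∈ (a1 i).index, ∑ v ∈ (b1 j).index,
              𝒮 ((a1 i).left u * (b1 j).left v) * (((a1 i).right u * (b1 j).right v) *
                (𝒮 (rb.right j) * 𝒮 (ra.right i)))
              = (∑ u ∈ (a1 i).index, ∑ v ∈ (b1 j).index,
                  𝒮 ((a1 i).left u * (b1 j).left v) * ((a1 i).right u * (b1 j).right v)) *
                    (𝒮 (rb.right j) * 𝒮 (ra.right i)) := by
                rw [Finset.sum_mul]
                refine Finset.sum_congr rfl fun u _ => ?_
                rw [Finset.sum_mul]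
                exact Finset.sum_congr rfl fun v _ => by simp [mul_assoc]
            _ = (ε (ra.left i) * ε (rb.left j)) • (𝒮 (rb.right j) * 𝒮 (ra.right i)) := by
                rw [hij, Bialgebra.counit_mul, smul_mul_assoc, one_mul]
      _ = 𝒮 b * 𝒮 a := by
          conv_rhs => rw [← sum_counit_smul_right rb, ← sum_counit_smul_right ra]
          rw [map_sum, map_sum, Finset.sum_mul_sum, Finset.sum_comm]
          refine Finset.sum_congr rfl fun i _ => Finset.sum_congr rfl fun j _ => ?_
          rw [map_smul, map_smul, smul_mul_assoc, Algebra.mul_smul_comm, smul_smul, mul_comm]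
  rw [← way1, way2]


lemma sum_smul_counit_left' {a : H} {ι : Type*} (r : Repr k a ι) :
    ∑ i ∈ r.index, counit (R := k) (r.right i) • r.left i = a := sum_smul_counit_left r

lemma counit_antipode (a : H) :
    counit (R := k) (antipode (R := k) (A := H) a) = counit (R := k) a := by
  classical
  have h1 := congrArg (counit (R := k)) (sum_antipode_mul_eq_algebraMap_counit (ℛ k a))
  rw [map_sum] at h1
  simp only [Bialgebra.counit_mul, Bialgebra.counit_algebraMap] at h1
  calc counit (R := k) (antipode (R := k) (A := H) a)
      = counit (R := k) (antipode (R := k) (A := H)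
          (∑ i ∈ (ℛ k a).index, counit (R := k) ((ℛ k a).right i) • (ℛ k a).left i)) := by
        rw [sum_smul_counit_left]
    _ = ∑ i ∈ (ℛ k a).index, counit (R := k) (antipode (R := k) (A := H) ((ℛ k a).left i)) *
          counit (R := k) ((ℛ k a).right i) := by
        rw [map_sum, map_sum]
        exact Finset.sum_congr rfl fun i _ => by rw [map_smul, map_smul, smul_eq_mul, mul_comm]
    _ = counit (R := k) a := h1

variable (I : Submodule k H)

/-- The coaction-minus-trivial-coaction map whose kernel is `B`. -/
def coinvMap : H →ₗ[k] H ⊗[k] (H ⧸ I) :=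
  (lTensor H I.mkQ) ∘ₗ (Coalgebra.comul (R := k)) -
    ((TensorProduct.mk k H (H ⧸ I)).flip (I.mkQ 1))

lemma isCoinvariant_iff (b : H) : IsCoinvariant k H I b ↔ coinvMap I b = 0 := by
  rw [IsCoinvariant, coinvMap, LinearMap.sub_apply, sub_eq_zero]
  rfl

lemma isCoinvariant_one : IsCoinvariant k H I 1 := by
  rw [IsCoinvariant]
  simp [Bialgebra.comul_one, Algebra.TensorProduct.one_def]

lemma IsCoinvariant.sub_smul_one {b : H} (hb : IsCoinvariant k H I b) :
    IsCoinvariant k H I (b - ε b • 1) := by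
  rw [isCoinvariant_iff] at *
  rw [map_sub, map_smul, hb, (isCoinvariant_iff I 1).mp (isCoinvariant_one I), smul_zero,
    sub_zero]

lemma coinv_counit_zero_mem {b : H} (hb : IsCoinvariant k H I b) (hε : ε b = 0) : b ∈ I := by
  have h : (LinearMap.lTensor H I.mkQ) (Coalgebra.comul (R := k) b) = b ⊗ₜ[k] I.mkQ 1 := hb
  rw [← (ℛ k b).eq, map_sum] at h
  apply_fun ((TensorProduct.lid k (H ⧸ I)).toLinearMap ∘ₗ
    (Coalgebra.counit (R := k)).rTensor (H ⧸ I)) at h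
  simp only [map_sum, coe_comp, Function.comp_apply, LinearEquiv.coe_coe, lTensor_tmul,
    rTensor_tmul, TensorProduct.lid_tmul, hε, zero_smul] at h
  have hb0 : I.mkQ b = 0 := by
    rw [← sum_counit_smul_right (ℛ k b), map_sum]
    simpa only [map_smul] using h
  simpa [Submodule.Quotient.mk_eq_zero] using hb0

lemma coinvMap_comul_eq_zero {b : H} (hb : IsCoinvariant k H I b) :
    (lTensor H (coinvMap I)) (Coalgebra.comul (R := k) b) = 0 := by
  classical
  let rb := ℛ k b
  let rb1 : ∀ i : rb.ι, Repr k (rb.left i) (H × H) := fun i => ℛ k (rb.left i)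
  let rb2 : ∀ i : rb.ι, Repr k (rb.right i) (H × H) := fun i => ℛ k (rb.right i)
  have hcoact : (LinearMap.lTensor H I.mkQ) (Coalgebra.comul (R := k) b) = b ⊗ₜ[k] I.mkQ 1 := hb
  -- expand lTensor f (comul b)
  have expand : (lTensor H (coinvMap I)) (Coalgebra.comul (R := k) b) =
      (∑ i ∈ rb.index, ∑ j ∈ (rb2 i).index,
        rb.left i ⊗ₜ[k] ((rb2 i).left j ⊗ₜ[k] I.mkQ ((rb2 i).right j))) -
      ∑ i ∈ rb.index, rb.left i ⊗ₜ[k] (rb.right i ⊗ₜ[k] I.mkQ 1) := by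
    rw [← rb.eq, map_sum]
    rw [← Finset.sum_sub_distrib]
    refine Finset.sum_congr rfl fun i _ => ?_
    rw [lTensor_tmul, coinvMap, LinearMap.sub_apply, TensorProduct.tmul_sub]
    congr 1
    · rw [comp_apply, ← (rb2 i).eq, map_sum, TensorProduct.tmul_sum]
      exact Finset.sum_congr rfl fun j _ => by rw [lTensor_tmul]
  -- the first double sum, rewritten with left-nested representations
  have switch : (∑ i ∈ rb.index, ∑ j ∈ (rb2 i).index,
        rb.left i ⊗ₜ[k] ((rb2 i).left j ⊗ₜ[k] I.mkQ ((rb2 i).right j))) =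
      ∑ i ∈ rb.index, ∑ j ∈ (rb1 i).index,
        (rb1 i).left j ⊗ₜ[k] ((rb1 i).right j ⊗ₜ[k] I.mkQ (rb.right i)) := by
    have t := triple_eq rb rb1 rb2 (lTensor H (lTensor H I.mkQ))
    simpa only [lTensor_tmul] using t.symm
  -- use the coinvariance to identify with the second sum
  have hc2 : ∑ i ∈ rb.index, rb.left i ⊗ₜ[k] I.mkQ (rb.right i) = b ⊗ₜ[k] I.mkQ 1 := by
    rw [← hcoact, ← rb.eq, map_sum]
    exact Finset.sum_congr rfl fun i _ => by rw [lTensor_tmul]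
  have final : (∑ i ∈ rb.index, ∑ j ∈ (rb1 i).index,
        (rb1 i).left j ⊗ₜ[k] ((rb1 i).right j ⊗ₜ[k] I.mkQ (rb.right i))) =
      ∑ i ∈ rb.index, rb.left i ⊗ₜ[k] (rb.right i ⊗ₜ[k] I.mkQ 1) := by
    apply_fun ((TensorProduct.assoc k H H (H ⧸ I)).toLinearMap ∘ₗ
      (Coalgebra.comul (R := k)).rTensor (H ⧸ I)) at hc2
    simp only [map_sum, coe_comp, Function.comp_apply, LinearEquiv.coe_coe, rTensor_tmul] at hc2
    calc (∑ i ∈ rb.index, ∑ j ∈ (rb1 i).index,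
          (rb1 i).left j ⊗ₜ[k] ((rb1 i).right j ⊗ₜ[k] I.mkQ (rb.right i)))
        = ∑ i ∈ rb.index, (TensorProduct.assoc k H H (H ⧸ I))
            ((Coalgebra.comul (R := k) (rb.left i)) ⊗ₜ[k] I.mkQ (rb.right i)) := by
          refine Finset.sum_congr rfl fun i _ => ?_
          rw [← (rb1 i).eq, TensorProduct.sum_tmul, map_sum]
          exact Finset.sum_congr rfl fun j _ => by rw [TensorProduct.assoc_tmul]
      _ = (TensorProduct.assoc k H H (H ⧸ I)) ((Coalgebra.comul (R := k) b) ⊗ₜ[k] I.mkQ 1) :=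
          hc2
      _ = ∑ i ∈ rb.index, rb.left i ⊗ₜ[k] (rb.right i ⊗ₜ[k] I.mkQ 1) := by
          rw [← rb.eq, TensorProduct.sum_tmul, map_sum]
          exact Finset.sum_congr rfl fun i _ => by rw [TensorProduct.assoc_tmul]
  rw [expand, switch, final, sub_self]

lemma lTensor_exact_rangeRestrict {V : Type*} [AddCommGroup V] [Module k V] (f : H →ₗ[k] V) :
    Function.Exact (lTensor H (LinearMap.ker f.rangeRestrict).subtype)
      (lTensor H f.rangeRestrict) :=
  lTensor_exact H (LinearMap.exact_subtype_ker_map f.rangeRestrict) f.surjective_rangeRestrict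

set_option maxHeartbeats 1000000 in
set_option synthInstance.maxHeartbeats 400000 in
/-- Coinvariant decomposition: `Δ b ∈ H ⊗ B` for coinvariant `b`. -/
lemma exists_coinv_repr {b : H} (hb : IsCoinvariant k H I b) :
    ∃ (n : ℕ) (c d : Fin n → H), (∀ m, IsCoinvariant k H I (d m)) ∧
      Coalgebra.comul (R := k) b = ∑ m, c m ⊗ₜ[k] d m := by
  classical
  set f := coinvMap I with hfdef
  have key : (lTensor H f.rangeRestrict) (Coalgebra.comul (R := k) b) = 0 := by
    have inj : Function.Injective (lTensor H (LinearMap.range f).subtype) :=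
      Module.Flat.lTensor_preserves_injective_linearMap _ (Submodule.injective_subtype _)
    apply inj
    rw [map_zero, ← LinearMap.comp_apply, ← lTensor_comp, LinearMap.subtype_comp_codRestrict f _ (fun x => LinearMap.mem_range_self f x)]
    exact coinvMap_comul_eq_zero I hb
  have hex : Function.Exact (lTensor H (LinearMap.ker f.rangeRestrict).subtype)
      (lTensor H f.rangeRestrict) :=
    lTensor_exact_rangeRestrict f
  obtain ⟨w, hw⟩ := (hex (Coalgebra.comul (R := k) b)).mp key
  obtain ⟨sf, rfl⟩ := TensorProduct.exists_finset w
  have hsum : Coalgebra.comul (R := k) b = ∑ p ∈ sf, p.1 ⊗ₜ[k] ((p.2 : H)) := by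
    rw [← hw, map_sum]
    exact Finset.sum_congr rfl fun p _ => by rw [lTensor_tmul]; rfl
  refine ⟨sf.card, fun m => (sf.equivFin.symm m).1.1,
    fun m => ((sf.equivFin.symm m).1.2 : H), fun m => ?_, ?_⟩
  · -- coinvariance of the right legs
    have hmem := ((sf.equivFin.symm m).1.2).2
    rw [LinearMap.mem_ker] at hmem
    rw [isCoinvariant_iff]
    have : f (((sf.equivFin.symm m).1.2 : H)) =
        (LinearMap.range f).subtype (f.rangeRestrict (((sf.equivFin.symm m).1.2 : H))) := rfl
    rw [this, hmem]
    rfl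
  · rw [hsum, ← Finset.sum_coe_sort sf (fun p => p.1 ⊗ₜ[k] ((p.2 : H)))]
    exact (Equiv.sum_comp sf.equivFin.symm _).symm


lemma canTilde_tmul (p q : H) {ι : Type*} (rq : Repr k q ι) :
    canTilde k H I (p ⊗ₜ[k] q) = ∑ j ∈ rq.index, (p * rq.left j) ⊗ₜ[k] I.mkQ (rq.right j) := by
  rw [canTilde]
  simp only [coe_comp, Function.comp_apply, LinearEquiv.coe_coe, lTensor_tmul]
  rw [← rq.eq, map_sum]
  simp only [lTensor_tmul]
  rw [TensorProduct.tmul_sum, map_sum, map_sum]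
  exact Finset.sum_congr rfl fun j _ => by
    rw [TensorProduct.assoc_symm_tmul, rTensor_tmul, mul'_apply]

/-- The map `h ⊗ h' ↦ h 𝒮(h'₍₁₎) ⊗ h'₍₂₎`. -/
def gam : H ⊗[k] H →ₗ[k] H ⊗[k] H :=
  (LinearMap.rTensor H (LinearMap.mul' k H)) ∘ₗ
    ((TensorProduct.assoc k H H H).symm.toLinearMap) ∘ₗ
      (LinearMap.lTensor H
        (((HopfAlgebra.antipode (R := k)).rTensor H) ∘ₗ (Coalgebra.comul (R := k))))

lemma gam_tmul (p q : H) {ι : Type*} (rq : Repr k q ι) :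
    gam (p ⊗ₜ[k] q) = ∑ j ∈ rq.index, (p * 𝒮 (rq.left j)) ⊗ₜ[k] rq.right j := by
  rw [gam]
  simp only [coe_comp, Function.comp_apply, LinearEquiv.coe_coe, lTensor_tmul]
  rw [← rq.eq, map_sum]
  simp only [rTensor_tmul]
  rw [TensorProduct.tmul_sum, map_sum, map_sum]
  exact Finset.sum_congr rfl fun j _ => by
    rw [TensorProduct.assoc_symm_tmul, rTensor_tmul, mul'_apply]

lemma canTilde_gam (p q : H) : canTilde k H I (gam (p ⊗ₜ[k] q)) = p ⊗ₜ[k] I.mkQ q := by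
  classical
  let rq := ℛ k q
  let q1 : ∀ i : rq.ι, Repr k (rq.left i) (H × H) := fun i => ℛ k (rq.left i)
  let q2 : ∀ i : rq.ι, Repr k (rq.right i) (H × H) := fun i => ℛ k (rq.right i)
  rw [gam_tmul p q rq, map_sum]
  calc (∑ i ∈ rq.index, canTilde k H I ((p * 𝒮 (rq.left i)) ⊗ₜ[k] rq.right i))
      = ∑ i ∈ rq.index, ∑ j ∈ (q2 i).index,
          ((p * 𝒮 (rq.left i)) * (q2 i).left j) ⊗ₜ[k] I.mkQ ((q2 i).right j) :=
        Finset.sum_congr rfl fun i _ => canTilde_tmul I _ _ (q2 i)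
    _ = ∑ i ∈ rq.index, ∑ j ∈ (q1 i).index,
          ((p * 𝒮 ((q1 i).left j)) * (q1 i).right j) ⊗ₜ[k] I.mkQ (rq.right i) := by
        have t := triple_eq rq q1 q2 ((TensorProduct.map
          ((LinearMap.mul' k H) ∘ₗ (LinearMap.rTensor H ((mulLeft k p) ∘ₗ (𝒮 : H →ₗ[k] H))))
          I.mkQ) ∘ₗ (TensorProduct.assoc k H H H).symm.toLinearMap)
        simpa only [coe_comp, Function.comp_apply, LinearEquiv.coe_coe,
          TensorProduct.assoc_symm_tmul, TensorProduct.map_tmul, rTensor_tmul, mul'_apply,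
          mulLeft_apply] using t.symm
    _ = ∑ i ∈ rq.index, ε (rq.left i) • (p ⊗ₜ[k] I.mkQ (rq.right i)) := by
        refine Finset.sum_congr rfl fun i _ => ?_
        have hin : (∑ j ∈ (q1 i).index, (p * 𝒮 ((q1 i).left j)) * (q1 i).right j)
            = ε (rq.left i) • p := by
          calc (∑ j ∈ (q1 i).index, (p * 𝒮 ((q1 i).left j)) * (q1 i).right j)
              = p * ∑ j ∈ (q1 i).index, 𝒮 ((q1 i).left j) * (q1 i).right j := by
                rw [Finset.mul_sum]
                exact Finset.sum_congr rfl fun j _ => by rw [mul_assoc]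
            _ = ε (rq.left i) • p := by
                rw [sum_antipode_mul_eq_smul (q1 i), Algebra.mul_smul_comm, mul_one]
        rw [← TensorProduct.sum_tmul, hin, TensorProduct.smul_tmul']
    _ = p ⊗ₜ[k] I.mkQ q := by
        calc (∑ i ∈ rq.index, ε (rq.left i) • (p ⊗ₜ[k] I.mkQ (rq.right i)))
            = p ⊗ₜ[k] ∑ i ∈ rq.index, ε (rq.left i) • I.mkQ (rq.right i) := by
              rw [TensorProduct.tmul_sum]
              exact Finset.sum_congr rfl fun i _ => (TensorProduct.tmul_smul _ _ _).symm
          _ = p ⊗ₜ[k] I.mkQ q := by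
              congr 1
              calc (∑ i ∈ rq.index, ε (rq.left i) • I.mkQ (rq.right i))
                  = I.mkQ (∑ i ∈ rq.index, ε (rq.left i) • rq.right i) := by
                    rw [map_sum]
                    exact Finset.sum_congr rfl fun i _ => (map_smul _ _ _).symm
                _ = I.mkQ q := by rw [sum_counit_smul_right]

lemma sum_gam_mul (p q : H) {ι : Type*} (rq : Repr k q ι) :
    (∑ i ∈ rq.index, gam ((p * rq.left i) ⊗ₜ[k] rq.right i)) = p ⊗ₜ[k] q := by
  classical
  let q1 : ∀ i : rq.ι, Repr k (rq.left i) (H × H) := fun i => ℛ k (rq.left i)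
  let q2 : ∀ i : rq.ι, Repr k (rq.right i) (H × H) := fun i => ℛ k (rq.right i)
  calc (∑ i ∈ rq.index, gam ((p * rq.left i) ⊗ₜ[k] rq.right i))
      = ∑ i ∈ rq.index, ∑ j ∈ (q2 i).index,
          ((p * rq.left i) * 𝒮 ((q2 i).left j)) ⊗ₜ[k] (q2 i).right j :=
        Finset.sum_congr rfl fun i _ => gam_tmul _ _ (q2 i)
    _ = ∑ i ∈ rq.index, ∑ j ∈ (q1 i).index,
          ((p * (q1 i).left j) * 𝒮 ((q1 i).right j)) ⊗ₜ[k] rq.right i := by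
        have t := triple_eq rq q1 q2 ((TensorProduct.map
          ((LinearMap.mul' k H) ∘ₗ (TensorProduct.map (mulLeft k p) (𝒮 : H →ₗ[k] H)))
          (LinearMap.id)) ∘ₗ (TensorProduct.assoc k H H H).symm.toLinearMap)
        simpa only [coe_comp, Function.comp_apply, LinearEquiv.coe_coe,
          TensorProduct.assoc_symm_tmul, TensorProduct.map_tmul, mul'_apply,
          mulLeft_apply, id_coe, id_eq] using t.symm
    _ = ∑ i ∈ rq.index, ε (rq.left i) • (p ⊗ₜ[k] rq.right i) := by
        refine Finset.sum_congr rfl fun i _ => ?_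
        have hin : (∑ j ∈ (q1 i).index, (p * (q1 i).left j) * 𝒮 ((q1 i).right j))
            = ε (rq.left i) • p := by
          calc (∑ j ∈ (q1 i).index, (p * (q1 i).left j) * 𝒮 ((q1 i).right j))
              = p * ∑ j ∈ (q1 i).index, (q1 i).left j * 𝒮 ((q1 i).right j) := by
                rw [Finset.mul_sum]
                exact Finset.sum_congr rfl fun j _ => by rw [mul_assoc]
            _ = ε (rq.left i) • p := by
                rw [sum_mul_antipode_eq_smul (q1 i), Algebra.mul_smul_comm, mul_one]
        rw [← TensorProduct.sum_tmul, hin, TensorProduct.smul_tmul']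
    _ = p ⊗ₜ[k] q := by
        calc (∑ i ∈ rq.index, ε (rq.left i) • (p ⊗ₜ[k] rq.right i))
            = p ⊗ₜ[k] ∑ i ∈ rq.index, ε (rq.left i) • rq.right i := by
              rw [TensorProduct.tmul_sum]
              exact Finset.sum_congr rfl fun i _ => (TensorProduct.tmul_smul _ _ _).symm
          _ = p ⊗ₜ[k] q := by rw [sum_counit_smul_right]

lemma relB_gen_mem {b : H} (hb : IsCoinvariant k H I b) (g g' : H) :
    (g * b) ⊗ₜ[k] g' - g ⊗ₜ[k] (b * g') ∈ relB k H I :=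
  Submodule.subset_span ⟨g, g', b, hb, rfl⟩

/-- The auxiliary map `x ⊗ y ↦ ε(x) y mod B⁺H`. -/
def psi (I : Submodule k H) : H ⊗[k] H →ₗ[k] H ⧸ (BplusH k H I) :=
  (BplusH k H I).mkQ ∘ₗ (TensorProduct.lid k H).toLinearMap ∘ₗ
    (Coalgebra.counit (R := k)).rTensor H

lemma psi_tmul (x y : H) : psi I (x ⊗ₜ[k] y) = (BplusH k H I).mkQ (ε x • y) := by
  simp [psi, TensorProduct.lid_tmul]

lemma counit_sub_smul_one (b : H) : ε (b - ε b • (1 : H)) = 0 := by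
  simp [map_sub, map_smul, Bialgebra.counit_one]

lemma psi_relB {z : H ⊗[k] H} (hz : z ∈ relB k H I) : psi I z = 0 := by
  have hle : relB k H I ≤ ker (psi I) := by
    rw [relB, Submodule.span_le]
    rintro w ⟨g, g', b, hb, rfl⟩
    rw [SetLike.mem_coe, mem_ker, map_sub, psi_tmul, psi_tmul, Bialgebra.counit_mul]
    have hmem : (b - ε b • 1) * g' ∈ BplusH k H I :=
      Submodule.subset_span ⟨b - ε b • 1, g', IsCoinvariant.sub_smul_one I hb,
        counit_sub_smul_one b, rfl⟩
    have hdiff : (ε g * ε b) • g' - ε g • (b * g') = -(ε g • ((b - ε b • 1) * g')) := by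
      rw [sub_mul, smul_mul_assoc, one_mul]
      module
    rw [← map_sub, hdiff, map_neg, map_smul, Submodule.mkQ_apply,
      (Submodule.Quotient.mk_eq_zero _).mpr hmem, smul_zero, neg_zero]
  exact (mem_ker).mp (hle hz)

lemma psi_gam_one (x : H) : psi I (gam ((1 : H) ⊗ₜ[k] x)) = (BplusH k H I).mkQ x := by
  rw [gam_tmul 1 x (ℛ k x), map_sum]
  calc (∑ i ∈ (ℛ k x).index, psi I ((1 * 𝒮 ((ℛ k x).left i)) ⊗ₜ[k] (ℛ k x).right i))
      = ∑ i ∈ (ℛ k x).index,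
          (BplusH k H I).mkQ (ε ((ℛ k x).left i) • (ℛ k x).right i) := by
        refine Finset.sum_congr rfl fun i _ => ?_
        rw [psi_tmul, one_mul, _root_.counit_antipode]
    _ = (BplusH k H I).mkQ x := by rw [← map_sum, sum_counit_smul_right]

lemma BplusH_le (hI : IsCoidealRightIdeal k H I) : BplusH k H I ≤ I := by
  rw [BplusH, Submodule.span_le]
  rintro x ⟨b, h, hb, hε, rfl⟩
  exact hI.1 b (coinv_counit_zero_mem I hb hε) h

lemma relB_le_ker (hI : IsCoidealRightIdeal k H I) :
    relB k H I ≤ ker (canTilde k H I) := by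
  classical
  rw [relB, Submodule.span_le]
  rintro z ⟨g, g', b, hb, rfl⟩
  rw [SetLike.mem_coe, mem_ker, map_sub, sub_eq_zero]
  obtain ⟨n, c, d, hd, hcd⟩ := exists_coinv_repr I hb
  let rb : Repr k b (Fin n) := ⟨Finset.univ, c, d, hcd.symm⟩
  let rg' := ℛ k g'
  rw [canTilde_tmul I (g * b) g' rg', canTilde_tmul I g (b * g') (mulRepr rb rg')]
  simp only [mulRepr, Finset.sum_product]
  rw [Finset.sum_comm]
  refine Finset.sum_congr rfl fun j _ => ?_
  have hdm : ∀ m : Fin n, I.mkQ (d m * rg'.right j) = ε (d m) • I.mkQ (rg'.right j) := by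
    intro m
    have hmem : (d m - ε (d m) • 1) * rg'.right j ∈ I :=
      hI.1 _ (coinv_counit_zero_mem I (IsCoinvariant.sub_smul_one I (hd m))
        (counit_sub_smul_one (d m))) _
    calc I.mkQ (d m * rg'.right j)
        = I.mkQ ((d m - ε (d m) • 1) * rg'.right j) + ε (d m) • I.mkQ (rg'.right j) := by
          rw [← map_smul, ← map_add]
          congr 1
          rw [sub_mul, smul_mul_assoc, one_mul, sub_add_cancel]
      _ = ε (d m) • I.mkQ (rg'.right j) := by
          rw [Submodule.mkQ_apply, (Submodule.Quotient.mk_eq_zero _).mpr hmem, zero_add]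
  calc ((g * b) * rg'.left j) ⊗ₜ[k] I.mkQ (rg'.right j)
      = (∑ m : Fin n, ε (d m) • (g * (c m * rg'.left j))) ⊗ₜ[k] I.mkQ (rg'.right j) := by
        congr 1
        calc (g * b) * rg'.left j
            = g * ((∑ m : Fin n, ε (d m) • c m) * rg'.left j) := by
              rw [show (∑ m : Fin n, ε (d m) • c m) = b from sum_smul_counit_left rb, mul_assoc]
          _ = ∑ m : Fin n, ε (d m) • (g * (c m * rg'.left j)) := by
              rw [Finset.sum_mul, Finset.mul_sum]
              exact Finset.sum_congr rfl fun m _ => by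
                rw [smul_mul_assoc, Algebra.mul_smul_comm]
    _ = ∑ m : Fin n, (g * (c m * rg'.left j)) ⊗ₜ[k] I.mkQ (d m * rg'.right j) := by
        rw [TensorProduct.sum_tmul]
        exact Finset.sum_congr rfl fun m _ => by
          rw [hdm m, TensorProduct.smul_tmul]
  
lemma gam_mem_relB (hI : IsCoidealRightIdeal k H I) (hJ : I = BplusH k H I) :
    ∀ x ∈ I, ∀ h : H, gam (h ⊗ₜ[k] x) ∈ relB k H I := by
  classical
  intro x hx h
  revert x
  have hsuff : BplusH k H I ≤ (relB k H I).comap (gam ∘ₗ (TensorProduct.mk k H H h)) := by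
    rw [BplusH, Submodule.span_le]
    rintro x ⟨b, g, hb, hε, rfl⟩
    rw [SetLike.mem_coe, Submodule.mem_comap, comp_apply, TensorProduct.mk_apply]
    obtain ⟨n, c, d, hd, hcd⟩ := exists_coinv_repr I hb
    let rb : Repr k b (Fin n) := ⟨Finset.univ, c, d, hcd.symm⟩
    let rg := ℛ k g
    rw [gam_tmul h (b * g) (mulRepr rb rg)]
    simp only [mulRepr, Finset.sum_product]
    have hsum0 : (∑ m : Fin n, ∑ j ∈ rg.index,
        ((h * 𝒮 (c m * rg.left j)) * d m) ⊗ₜ[k] rg.right j) = 0 := by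
      rw [Finset.sum_comm]
      refine Finset.sum_eq_zero fun j _ => ?_
      rw [← TensorProduct.sum_tmul]
      have h0 : (∑ m : Fin n, (h * 𝒮 (c m * rg.left j)) * d m) = 0 := by
        have hS : ∀ m : Fin n, (h * 𝒮 (c m * rg.left j)) * d m
            = (h * 𝒮 (rg.left j)) * (𝒮 (c m) * d m) := fun m => by
          rw [_root_.antipode_mul]
          simp [mul_assoc]
        rw [Finset.sum_congr rfl fun m _ => hS m, ← Finset.mul_sum,
          show (∑ m : Fin n, 𝒮 (c m) * d m) = algebraMap k H (ε b) from
            sum_antipode_mul_eq_algebraMap_counit rb, hε, map_zero, mul_zero]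
      rw [h0, TensorProduct.zero_tmul]
    have hsplit : (∑ m : Fin n, ∑ j ∈ rg.index,
          (h * 𝒮 (c m * rg.left j)) ⊗ₜ[k] (d m * rg.right j))
        = - ∑ m : Fin n, ∑ j ∈ rg.index,
            (((h * 𝒮 (c m * rg.left j)) * d m) ⊗ₜ[k] rg.right j
              - (h * 𝒮 (c m * rg.left j)) ⊗ₜ[k] (d m * rg.right j)) := by
      have hdist : (∑ m : Fin n, ∑ j ∈ rg.index,
            (((h * 𝒮 (c m * rg.left j)) * d m) ⊗ₜ[k] rg.right j
              - (h * 𝒮 (c m * rg.left j)) ⊗ₜ[k] (d m * rg.right j)))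
          = (∑ m : Fin n, ∑ j ∈ rg.index,
              ((h * 𝒮 (c m * rg.left j)) * d m) ⊗ₜ[k] rg.right j)
            - ∑ m : Fin n, ∑ j ∈ rg.index,
              (h * 𝒮 (c m * rg.left j)) ⊗ₜ[k] (d m * rg.right j) := by
        simp [Finset.sum_sub_distrib]
      rw [hdist, hsum0, zero_sub, neg_neg]
    rw [hsplit]
    exact neg_mem (Submodule.sum_mem _ fun m _ => Submodule.sum_mem _ fun j _ =>
      relB_gen_mem I (hd m) _ _)
  intro x hx
  exact hsuff (hJ ▸ hx)

end GaloisAux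

open Coalgebra HopfAlgebra LinearMap in
theorem homogeneous_extension_galois_iff
    {k : Type*} [Field k] {H : Type*} [Ring H] [HopfAlgebra k H]
    (I : Submodule k H) (hI : IsCoidealRightIdeal k H I) :
    (∃ e : ((H ⊗[k] H) ⧸ relB k H I) ≃ₗ[k] H ⊗[k] (H ⧸ I),
        ∀ x : H ⊗[k] H, e (Submodule.Quotient.mk x) = canTilde k H I x)
      ↔ I = BplusH k H I := by
  classical
  constructor
  · rintro ⟨e, he⟩
    refine le_antisymm (fun x hx => ?_) (BplusH_le I hI)
    have h1 : canTilde k H I (gam ((1 : H) ⊗ₜ[k] x)) = 0 := by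
      rw [canTilde_gam,
        show I.mkQ x = 0 from (Submodule.Quotient.mk_eq_zero I).mpr hx,
        TensorProduct.tmul_zero]
    have h2 : gam ((1 : H) ⊗ₜ[k] x) ∈ relB k H I := by
      have h3 : e (Submodule.Quotient.mk (gam ((1 : H) ⊗ₜ[k] x))) = 0 := by
        rw [he, h1]
      have h4 : (Submodule.Quotient.mk (gam ((1 : H) ⊗ₜ[k] x)) :
          (H ⊗[k] H) ⧸ relB k H I) = 0 := by
        apply e.injective
        rw [h3, map_zero]
      exact (Submodule.Quotient.mk_eq_zero _).mp h4
    have h5 := psi_relB I h2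
    rw [psi_gam_one, Submodule.mkQ_apply] at h5
    exact (Submodule.Quotient.mk_eq_zero _).mp h5
  · intro hJ
    have hker : ∀ x ∈ I, ∀ h : H, gam (h ⊗ₜ[k] x) ∈ relB k H I :=
      gam_mem_relB I hI hJ
    let Ψ₀ : H →ₗ[k] H →ₗ[k] ((H ⊗[k] H) ⧸ relB k H I) :=
      TensorProduct.curry (((relB k H I).mkQ ∘ₗ gam) ∘ₗ
        (TensorProduct.comm k H H).toLinearMap)
    have hΨ₀ : ∀ x ∈ I, Ψ₀ x = 0 := fun x hx => LinearMap.ext fun h => by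
      simp only [Ψ₀, TensorProduct.curry_apply, LinearMap.coe_comp, Function.comp_apply,
        LinearEquiv.coe_coe, TensorProduct.comm_tmul, Submodule.mkQ_apply, LinearMap.zero_apply]
      exact (Submodule.Quotient.mk_eq_zero _).mpr (hker x hx h)
    let Ψ : (H ⧸ I) →ₗ[k] H →ₗ[k] ((H ⊗[k] H) ⧸ relB k H I) :=
      I.liftQ Ψ₀ (fun x hx => by rw [LinearMap.mem_ker]; exact hΨ₀ x hx)
    let φ : H ⊗[k] (H ⧸ I) →ₗ[k] ((H ⊗[k] H) ⧸ relB k H I) := TensorProduct.lift Ψ.flip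
    have hφ : ∀ p q : H, φ (p ⊗ₜ[k] I.mkQ q)
        = Submodule.Quotient.mk (gam (p ⊗ₜ[k] q)) := fun p q => by
      simp only [φ, Ψ, Ψ₀, TensorProduct.lift.tmul, LinearMap.flip_apply, Submodule.mkQ_apply,
        Submodule.liftQ_apply, TensorProduct.curry_apply, LinearMap.coe_comp,
        Function.comp_apply, LinearEquiv.coe_coe, TensorProduct.comm_tmul]
    let canBar : ((H ⊗[k] H) ⧸ relB k H I) →ₗ[k] H ⊗[k] (H ⧸ I) :=
      (relB k H I).liftQ (canTilde k H I) (relB_le_ker I hI)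
    have hcb : ∀ z : H ⊗[k] H, canBar (Submodule.Quotient.mk z) = canTilde k H I z :=
      fun z => rfl
    have h1 : canBar ∘ₗ φ = LinearMap.id := by
      apply TensorProduct.ext'
      intro p w
      obtain ⟨q, rfl⟩ := I.mkQ_surjective w
      rw [LinearMap.comp_apply, hφ, LinearMap.id_apply]
      exact canTilde_gam I p q
    have h2 : φ ∘ₗ canBar = LinearMap.id := by
      refine Submodule.linearMap_qext _ ?_
      apply TensorProduct.ext'
      intro p q
      rw [LinearMap.comp_apply, LinearMap.comp_apply, LinearMap.comp_apply,
        Submodule.mkQ_apply, hcb, canTilde_tmul I p q (ℛ k q), map_sum,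
        LinearMap.id_apply]
      calc (∑ i ∈ (ℛ k q).index, φ ((p * (ℛ k q).left i) ⊗ₜ[k] I.mkQ ((ℛ k q).right i)))
          = ∑ i ∈ (ℛ k q).index, (Submodule.Quotient.mk
              (gam ((p * (ℛ k q).left i) ⊗ₜ[k] (ℛ k q).right i)) :
                (H ⊗[k] H) ⧸ relB k H I) :=
            Finset.sum_congr rfl fun i _ => hφ _ _
        _ = Submodule.Quotient.mk (p ⊗ₜ[k] q) := by
            simp only [← Submodule.mkQ_apply]
            rw [← map_sum, sum_gam_mul p q (ℛ k q)]
    exact ⟨LinearEquiv.ofLinear canBar φ h1 h2, fun z => rfl⟩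
end

section
/- Let H be a Hopf algebra over a field k. Then H, equipped with the left adjoint H-action h ▷ m := h(2) m S(h(1)) and the right H-coaction given by the comultiplication Δ, is a left-right stable anti-Yetter–Drinfeld module over H; explicitly, for all h, m ∈ H: Δ(h ▷ m) = (h(2) ▷ m(1)) ⊗ h(3) m(2) S(h(1)) (anti-Yetter–Drinfeld compatibility), and m(2) ▷ m(1) = m (stability). -/
/-- The December 2024 Mathlib `Coalgebra.Repr`, whose indexing type `ι` was a bundled field;
current Mathlib makes `ι` a parameter instead. -/
structure Coalgebra.ReprBundled (R : Type*) {A : Type*}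
    [CommSemiring R] [AddCommMonoid A] [Module R A] [CoalgebraStruct R A] (a : A) where
  /-- the indexing type of a representation of `comul a` -/
  {ι : Type*}
  /-- the finite indexing set of a representation of `comul a` -/
  (index : Finset ι)
  /-- the first coordinate of a representation of `comul a` -/
  (left : ι → A)
  /-- the second coordinate of a representation of `comul a` -/
  (right : ι → A)
  /-- `comul a` is equal to a finite sum of some pure tensors -/
  (eq : ∑ i ∈ index, left i ⊗ₜ[R] right i = CoalgebraStruct.comul a)

open Coalgebra TensorProduct LinearMap

namespace SAYDaux

section bundled
variable {R A : Type*} [CommSemiring R] [AddCommMonoid A] [Module R A]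

/-- Unbundle a bundled representation. -/
def toR [CoalgebraStruct R A] {a : A} (r : Coalgebra.ReprBundled R a) :
    Coalgebra.Repr R a r.ι := ⟨r.index, r.left, r.right, r.eq⟩

/-- An arbitrary bundled representation. -/
noncomputable def arbB (R : Type*) {A : Type*} [CommSemiring R] [AddCommMonoid A] [Module R A]
    [CoalgebraStruct R A] (a : A) : Coalgebra.ReprBundled R a :=
  ⟨(ℛ R a).index, (ℛ R a).left, (ℛ R a).right, (ℛ R a).eq⟩

lemma sum_counit_tmul_eqB [Coalgebra R A] {a : A} (r : Coalgebra.ReprBundled R a) :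
    ∑ i ∈ r.index, Coalgebra.counit (R := R) (r.left i) ⊗ₜ[R] (r.right i) = 1 ⊗ₜ[R] a :=
  Coalgebra.sum_counit_tmul_eq (toR r)

lemma sum_tmul_counit_eqB [Coalgebra R A] {a : A} (r : Coalgebra.ReprBundled R a) :
    ∑ i ∈ r.index, (r.left i) ⊗ₜ[R] Coalgebra.counit (R := R) (r.right i) = a ⊗ₜ[R] 1 :=
  Coalgebra.sum_tmul_counit_eq (toR r)

lemma sum_tmul_tmul_eqB [Coalgebra R A] {a : A} (repr : Coalgebra.ReprBundled R a)
    (a₁ : (i : repr.ι) → Coalgebra.ReprBundled R (repr.left i))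
    (a₂ : (i : repr.ι) → Coalgebra.ReprBundled R (repr.right i)) :
    ∑ i ∈ repr.index, ∑ j ∈ (a₁ i).index,
      (a₁ i).left j ⊗ₜ[R] ((a₁ i).right j ⊗ₜ[R] repr.right i)
      = ∑ i ∈ repr.index, ∑ j ∈ (a₂ i).index,
      repr.left i ⊗ₜ[R] ((a₂ i).left j ⊗ₜ[R] (a₂ i).right j) :=
  Coalgebra.sum_tmul_tmul_eq (toR repr) (fun i => toR (a₁ i)) (fun i => toR (a₂ i))

theorem sum_map_tmul_tmul_eqB [Coalgebra R A] {B : Type*} [AddCommMonoid B] [Module R B]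
    {F : Type*} [FunLike F A B] [LinearMapClass F R A B] (f g h : F) (a : A)
    {repr : Coalgebra.ReprBundled R a}
    {a₁ : (i : repr.ι) → Coalgebra.ReprBundled R (repr.left i)}
    {a₂ : (i : repr.ι) → Coalgebra.ReprBundled R (repr.right i)} :
    ∑ i ∈ repr.index, ∑ j ∈ (a₂ i).index,
      f (repr.left i) ⊗ₜ (g ((a₂ i).left j) ⊗ₜ h ((a₂ i).right j)) =
    ∑ i ∈ repr.index, ∑ j ∈ (a₁ i).index,
      f ((a₁ i).left j) ⊗ₜ[R] (g ((a₁ i).right j) ⊗ₜ[R] h (repr.right i)) :=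
  Coalgebra.sum_map_tmul_tmul_eq f g h a (repr := toR repr) (a₁ := fun i => toR (a₁ i))
    (a₂ := fun i => toR (a₂ i))

end bundled

lemma sum_antipode_mul_eqB {R A : Type*} [CommSemiring R] [Semiring A] [HopfAlgebra R A] {a : A}
    (repr : Coalgebra.ReprBundled R a) :
    ∑ i ∈ repr.index, HopfAlgebra.antipode R (repr.left i) * repr.right i =
      algebraMap R A (Coalgebra.counit a) :=
  HopfAlgebra.sum_antipode_mul_eq_algebraMap_counit (toR repr)

lemma sum_mul_antipode_eqB {R A : Type*} [CommSemiring R] [Semiring A] [HopfAlgebra R A] {a : A}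
    (repr : Coalgebra.ReprBundled R a) :
    ∑ i ∈ repr.index, repr.left i * HopfAlgebra.antipode R (repr.right i) =
      algebraMap R A (Coalgebra.counit a) :=
  HopfAlgebra.sum_mul_antipode_eq_algebraMap_counit (toR repr)

variable {k H : Type*} [CommSemiring k] [Semiring H] [HopfAlgebra k H]

section conv
variable {A : Type*} [Semiring A] [Algebra k A]

/-- Convolution product on `Hom(H, A)`. -/
noncomputable def conv (f g : H →ₗ[k] A) : H →ₗ[k] A :=
  LinearMap.mul' k A ∘ₗ TensorProduct.map f g ∘ₗ Coalgebra.comul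

/-- Convolution unit. -/
noncomputable def cunit : H →ₗ[k] A := Algebra.linearMap k A ∘ₗ Coalgebra.counit

lemma conv_repr (f g : H →ₗ[k] A) {x : H} (r : Coalgebra.ReprBundled k x) :
    conv f g x = ∑ i ∈ r.index, f (r.left i) * g (r.right i) := by
  simp only [conv, LinearMap.comp_apply, ← r.eq, map_sum, TensorProduct.map_tmul,
    LinearMap.mul'_apply]

lemma smul_sum_eq (x : H) (r : Coalgebra.ReprBundled k x) :
    ∑ i ∈ r.index, Coalgebra.counit (R := k) (r.left i) • r.right i = x := by
  have := sum_counit_tmul_eqB r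
  apply_fun (TensorProduct.lid k H) at this
  simpa only [map_sum, TensorProduct.lid_tmul, one_smul] using this

lemma sum_smul_eq (x : H) (r : Coalgebra.ReprBundled k x) :
    ∑ i ∈ r.index, Coalgebra.counit (R := k) (r.right i) • r.left i = x := by
  have := sum_tmul_counit_eqB r
  apply_fun (TensorProduct.rid k H) at this
  simpa only [map_sum, TensorProduct.rid_tmul, one_smul] using this

lemma cunit_conv (f : H →ₗ[k] A) : conv cunit f = f := by
  ext x
  obtain r := arbB k x
  rw [conv_repr _ _ r]
  simp only [cunit, LinearMap.comp_apply, Algebra.linearMap_apply]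
  calc ∑ i ∈ r.index, algebraMap k A (Coalgebra.counit (r.left i)) * f (r.right i)
      = ∑ i ∈ r.index, f (Coalgebra.counit (R := k) (r.left i) • r.right i) := by
        simp_rw [map_smul, ← Algebra.smul_def]
    _ = f x := by rw [← map_sum, smul_sum_eq x r]

lemma conv_cunit (f : H →ₗ[k] A) : conv f cunit = f := by
  ext x
  obtain r := arbB k x
  rw [conv_repr _ _ r]
  simp only [cunit, LinearMap.comp_apply, Algebra.linearMap_apply]
  calc ∑ i ∈ r.index, f (r.left i) * algebraMap k A (Coalgebra.counit (r.right i))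
      = ∑ i ∈ r.index, f (Coalgebra.counit (R := k) (r.right i) • r.left i) := by
        refine Finset.sum_congr rfl fun i _ => ?_
        rw [map_smul, Algebra.smul_def, ← Algebra.commutes]
    _ = f x := by rw [← map_sum, sum_smul_eq x r]

lemma conv_assoc (f g h : H →ₗ[k] A) : conv (conv f g) h = conv f (conv g h) := by
  ext x
  set r := arbB k x
  set a₁ : (i : r.ι) → Coalgebra.ReprBundled k (r.left i) := fun i => arbB k (r.left i)
  set a₂ : (i : r.ι) → Coalgebra.ReprBundled k (r.right i) := fun i => arbB k (r.right i)
  have key := sum_map_tmul_tmul_eqB (R := k) f g h x (repr := r) (a₁ := a₁) (a₂ := a₂)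
  have key2 := congrArg (LinearMap.mul' k A ∘ₗ LinearMap.lTensor A (LinearMap.mul' k A)) key
  simp only [map_sum, LinearMap.comp_apply, LinearMap.lTensor_tmul, LinearMap.mul'_apply] at key2
  rw [conv_repr (conv f g) h r, conv_repr f (conv g h) r]
  calc ∑ i ∈ r.index, conv f g (r.left i) * h (r.right i)
      = ∑ i ∈ r.index, ∑ j ∈ (a₁ i).index,
          f ((a₁ i).left j) * (g ((a₁ i).right j) * h (r.right i)) := by
        refine Finset.sum_congr rfl fun i _ => ?_
        rw [conv_repr f g (a₁ i), Finset.sum_mul]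
        simp [mul_assoc]
    _ = ∑ i ∈ r.index, ∑ j ∈ (a₂ i).index,
          f (r.left i) * (g ((a₂ i).left j) * h ((a₂ i).right j)) := key2.symm
    _ = ∑ i ∈ r.index, f (r.left i) * conv g h (r.right i) := by
        refine Finset.sum_congr rfl fun i _ => ?_
        rw [conv_repr g h (a₂ i), Finset.mul_sum]

end conv

section iterated

/-- `Δ₂ = (1 ⊗ Δ) ∘ Δ`. -/
noncomputable def Δ2 : H →ₗ[k] H ⊗[k] (H ⊗[k] H) :=
  LinearMap.lTensor H Coalgebra.comul ∘ₗ Coalgebra.comul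

/-- `Δ₃ = (1 ⊗ 1 ⊗ Δ) ∘ Δ₂`. -/
noncomputable def Δ3 : H →ₗ[k] H ⊗[k] (H ⊗[k] (H ⊗[k] H)) :=
  LinearMap.lTensor H (LinearMap.lTensor H Coalgebra.comul) ∘ₗ Δ2

lemma P0 {x : H} (r : Coalgebra.ReprBundled k x) (s : ∀ i : r.ι, Coalgebra.ReprBundled k (r.right i)) :
    (Δ2 x : H ⊗[k] (H ⊗[k] H)) =
      ∑ i ∈ r.index, ∑ j ∈ (s i).index,
        r.left i ⊗ₜ[k] ((s i).left j ⊗ₜ[k] (s i).right j) := by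
  simp only [Δ2, LinearMap.comp_apply, ← r.eq, map_sum, LinearMap.lTensor_tmul]
  refine Finset.sum_congr rfl fun i _ => ?_
  rw [← (s i).eq, TensorProduct.tmul_sum]

lemma Pleft {x : H} (r : Coalgebra.ReprBundled k x) (w : ∀ i : r.ι, Coalgebra.ReprBundled k (r.left i)) :
    (Δ2 x : H ⊗[k] (H ⊗[k] H)) =
      ∑ i ∈ r.index, ∑ j ∈ (w i).index,
        (w i).left j ⊗ₜ[k] ((w i).right j ⊗ₜ[k] r.right i) := by
  rw [P0 r (fun i => arbB k (r.right i))]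
  exact (sum_tmul_tmul_eqB r w _).symm

lemma P3 {x : H} (r : Coalgebra.ReprBundled k x) (s : ∀ i : r.ι, Coalgebra.ReprBundled k (r.right i))
    (u : ∀ (i : r.ι) (j : (s i).ι), Coalgebra.ReprBundled k ((s i).right j)) :
    (Δ3 x : H ⊗[k] (H ⊗[k] (H ⊗[k] H))) =
      ∑ i ∈ r.index, ∑ j ∈ (s i).index, ∑ l ∈ (u i j).index,
        r.left i ⊗ₜ[k] ((s i).left j ⊗ₜ[k] ((u i j).left l ⊗ₜ[k] (u i j).right l)) := by
  rw [Δ3, LinearMap.comp_apply, P0 r s]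
  simp only [map_sum, LinearMap.lTensor_tmul]
  refine Finset.sum_congr rfl fun i _ => Finset.sum_congr rfl fun j _ => ?_
  rw [← (u i j).eq, TensorProduct.tmul_sum, TensorProduct.tmul_sum]

lemma P1 {x : H} (r : Coalgebra.ReprBundled k x) (s : ∀ i : r.ι, Coalgebra.ReprBundled k (r.right i))
    (t : ∀ (i : r.ι) (j : (s i).ι), Coalgebra.ReprBundled k ((s i).left j)) :
    (Δ3 x : H ⊗[k] (H ⊗[k] (H ⊗[k] H))) =
      ∑ i ∈ r.index, ∑ j ∈ (s i).index, ∑ l ∈ (t i j).index,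
        r.left i ⊗ₜ[k] ((t i j).left l ⊗ₜ[k] ((t i j).right l ⊗ₜ[k] (s i).right j)) := by
  rw [P3 r s (fun i j => arbB k ((s i).right j))]
  refine Finset.sum_congr rfl fun i _ => ?_
  simp_rw [← TensorProduct.tmul_sum]
  congr 1
  simp_rw [TensorProduct.tmul_sum]
  exact (sum_tmul_tmul_eqB (s i) (t i) _).symm

lemma P2 {x : H} (r : Coalgebra.ReprBundled k x) (w : ∀ i : r.ι, Coalgebra.ReprBundled k (r.left i))
    (s : ∀ i : r.ι, Coalgebra.ReprBundled k (r.right i)) :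
    (Δ3 x : H ⊗[k] (H ⊗[k] (H ⊗[k] H))) =
      ∑ i ∈ r.index, ∑ j ∈ (w i).index, ∑ p ∈ (s i).index,
        (w i).left j ⊗ₜ[k] ((w i).right j ⊗ₜ[k] ((s i).left p ⊗ₜ[k] (s i).right p)) := by
  rw [Δ3, LinearMap.comp_apply, Pleft r w]
  simp only [map_sum, LinearMap.lTensor_tmul]
  refine Finset.sum_congr rfl fun i _ => Finset.sum_congr rfl fun j _ => ?_
  rw [← (s i).eq, TensorProduct.tmul_sum, TensorProduct.tmul_sum]

end iterated

section maps

/-- The permutation `a ⊗ (b ⊗ (c ⊗ d)) ↦ (b ⊗ c) ⊗ (a ⊗ d)`. -/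
noncomputable def perm : H ⊗[k] (H ⊗[k] (H ⊗[k] H)) →ₗ[k] (H ⊗[k] H) ⊗[k] (H ⊗[k] H) :=
  (TensorProduct.leftComm k H (H ⊗[k] H) H).toLinearMap ∘ₗ
    LinearMap.lTensor H (TensorProduct.assoc k H H H).symm.toLinearMap

@[simp] lemma perm_tmul (a b c d : H) :
    (perm (a ⊗ₜ[k] (b ⊗ₜ[k] (c ⊗ₜ[k] d))) : (H ⊗[k] H) ⊗[k] (H ⊗[k] H)) =
      (b ⊗ₜ[k] c) ⊗ₜ[k] (a ⊗ₜ[k] d) := by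
  simp [perm]

/-- `b ⊗ c ↦ S(b) * c`. -/
noncomputable def sMul : H ⊗[k] H →ₗ[k] H :=
  LinearMap.mul' k H ∘ₗ LinearMap.rTensor H (HopfAlgebra.antipode (R := k))

@[simp] lemma sMul_tmul (b c : H) : (sMul (b ⊗ₜ[k] c) : H) =
    HopfAlgebra.antipode (R := k) b * c := by
  simp [sMul]

/-- `Ψ : a ⊗ b ⊗ c ⊗ d ↦ (S(b) c) ⊗ (S(a) d)`. -/
noncomputable def Ψ : H ⊗[k] (H ⊗[k] (H ⊗[k] H)) →ₗ[k] H ⊗[k] H :=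
  TensorProduct.map sMul sMul ∘ₗ perm

@[simp] lemma Ψ_tmul (a b c d : H) :
    (Ψ (a ⊗ₜ[k] (b ⊗ₜ[k] (c ⊗ₜ[k] d))) : H ⊗[k] H) =
      (HopfAlgebra.antipode (R := k) b * c) ⊗ₜ[k] (HopfAlgebra.antipode (R := k) a * d) := by
  simp [Ψ]

lemma comul_algebraMap (c : k) :
    Coalgebra.comul (R := k) (algebraMap k H c) = algebraMap k (H ⊗[k] H) c := by
  simp [Algebra.algebraMap_eq_smul_one]

/-- `F = (S ⊗ S) ∘ swap ∘ Δ`. -/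
noncomputable def Fmap : H →ₗ[k] H ⊗[k] H :=
  TensorProduct.map (HopfAlgebra.antipode (R := k)) (HopfAlgebra.antipode (R := k)) ∘ₗ
    (TensorProduct.comm k H H).toLinearMap ∘ₗ Coalgebra.comul

lemma Fmap_repr {x : H} (w : Coalgebra.ReprBundled k x) :
    (Fmap x : H ⊗[k] H) = ∑ a ∈ w.index,
      HopfAlgebra.antipode (R := k) (w.right a) ⊗ₜ[k]
        HopfAlgebra.antipode (R := k) (w.left a) := by
  simp only [Fmap, LinearMap.comp_apply, LinearEquiv.coe_coe, ← w.eq, map_sum,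
    TensorProduct.comm_tmul, TensorProduct.map_tmul]

lemma conv_comul_comulS :
    conv (Coalgebra.comul : H →ₗ[k] H ⊗[k] H)
      (Coalgebra.comul ∘ₗ HopfAlgebra.antipode (R := k)) = cunit := by
  ext x
  obtain r := arbB k x
  rw [conv_repr _ _ r]
  simp only [LinearMap.comp_apply]
  calc ∑ i ∈ r.index, Coalgebra.comul (R := k) (r.left i) *
          Coalgebra.comul (HopfAlgebra.antipode (R := k) (r.right i))
      = Coalgebra.comul (R := k)
          (∑ i ∈ r.index, r.left i * HopfAlgebra.antipode (R := k) (r.right i)) := by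
        rw [map_sum]; exact Finset.sum_congr rfl fun i _ => (Bialgebra.comul_mul _ _).symm
    _ = algebraMap k (H ⊗[k] H) (Coalgebra.counit x) := by
        rw [SAYDaux.sum_mul_antipode_eqB, comul_algebraMap]

lemma conv_F_comul : conv (Fmap : H →ₗ[k] H ⊗[k] H) Coalgebra.comul = cunit := by
  ext x
  set r := arbB k x with hr
  set s : (i : r.ι) → Coalgebra.ReprBundled k (r.right i) := fun i => arbB k (r.right i) with hs
  set w : (i : r.ι) → Coalgebra.ReprBundled k (r.left i) := fun i => arbB k (r.left i) with hw
  set v : (i : r.ι) → (j : (s i).ι) → Coalgebra.ReprBundled k ((s i).left j) :=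
    fun i j => arbB k ((s i).left j) with hv
  have key : conv (Fmap : H →ₗ[k] H ⊗[k] H) Coalgebra.comul x = Ψ (Δ3 x) := by
    rw [conv_repr _ _ r, P2 r w s]
    simp only [map_sum, Ψ_tmul]
    refine Finset.sum_congr rfl fun i _ => ?_
    rw [Fmap_repr (w i), ← (s i).eq, Finset.sum_mul_sum]
    simp only [Algebra.TensorProduct.tmul_mul_tmul]
  rw [key, P1 r s v]
  simp only [map_sum, Ψ_tmul]
  calc ∑ i ∈ r.index, ∑ j ∈ (s i).index, ∑ l ∈ (v i j).index,
        (HopfAlgebra.antipode (R := k) ((v i j).left l) * (v i j).right l) ⊗ₜ[k]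
          (HopfAlgebra.antipode (R := k) (r.left i) * (s i).right j)
      = ∑ i ∈ r.index, ∑ j ∈ (s i).index,
          (algebraMap k H (Coalgebra.counit ((s i).left j))) ⊗ₜ[k]
            (HopfAlgebra.antipode (R := k) (r.left i) * (s i).right j) := by
        refine Finset.sum_congr rfl fun i _ => Finset.sum_congr rfl fun j _ => ?_
        rw [← TensorProduct.sum_tmul, SAYDaux.sum_antipode_mul_eqB (v i j)]
    _ = ∑ i ∈ r.index,
          (1 : H) ⊗ₜ[k] (HopfAlgebra.antipode (R := k) (r.left i) * r.right i) := by
        refine Finset.sum_congr rfl fun i _ => ?_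
        calc ∑ j ∈ (s i).index,
              (algebraMap k H (Coalgebra.counit ((s i).left j))) ⊗ₜ[k]
                (HopfAlgebra.antipode (R := k) (r.left i) * (s i).right j)
            = ∑ j ∈ (s i).index, (1 : H) ⊗ₜ[k]
                (HopfAlgebra.antipode (R := k) (r.left i) *
                  (Coalgebra.counit (R := k) ((s i).left j) • (s i).right j)) := by
              refine Finset.sum_congr rfl fun j _ => ?_
              rw [Algebra.algebraMap_eq_smul_one, TensorProduct.smul_tmul,
                mul_smul_comm]
          _ = (1 : H) ⊗ₜ[k] (HopfAlgebra.antipode (R := k) (r.left i) * r.right i) := by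
              rw [← TensorProduct.tmul_sum, ← Finset.mul_sum, smul_sum_eq (r.right i) (s i)]
    _ = cunit x := by
        rw [← TensorProduct.tmul_sum, SAYDaux.sum_antipode_mul_eqB r]
        simp [cunit, Algebra.algebraMap_eq_smul_one, Algebra.TensorProduct.one_def]

/-- `Δ ∘ S = (S ⊗ S) ∘ swap ∘ Δ`. -/
lemma comul_comp_antipode :
    (Coalgebra.comul ∘ₗ HopfAlgebra.antipode (R := k) : H →ₗ[k] H ⊗[k] H) = Fmap := by
  calc (Coalgebra.comul ∘ₗ HopfAlgebra.antipode (R := k) : H →ₗ[k] H ⊗[k] H)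
      = conv cunit (Coalgebra.comul ∘ₗ HopfAlgebra.antipode (R := k)) := (cunit_conv _).symm
    _ = conv (conv Fmap Coalgebra.comul) (Coalgebra.comul ∘ₗ HopfAlgebra.antipode (R := k)) := by
        rw [conv_F_comul]
    _ = conv Fmap (conv Coalgebra.comul (Coalgebra.comul ∘ₗ HopfAlgebra.antipode (R := k))) :=
        conv_assoc _ _ _
    _ = conv Fmap cunit := by rw [conv_comul_comulS]
    _ = Fmap := conv_cunit _

lemma comul_antipode_repr {x : H} (w : Coalgebra.ReprBundled k x) :
    Coalgebra.comul (R := k) (HopfAlgebra.antipode (R := k) x) = ∑ a ∈ w.index,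
      HopfAlgebra.antipode (R := k) (w.right a) ⊗ₜ[k]
        HopfAlgebra.antipode (R := k) (w.left a) := by
  have := congrFun (congrArg DFunLike.coe (comul_comp_antipode (k := k) (H := H))) x
  simp only [LinearMap.comp_apply] at this
  rw [this, Fmap_repr w]

/-- `b ⊗ c ↦ (c * x) * S(b)`, after swapping. -/
noncomputable def mSand (x : H) : H ⊗[k] H →ₗ[k] H :=
  LinearMap.mul' k H ∘ₗ
    TensorProduct.map (LinearMap.mulRight k x) (HopfAlgebra.antipode (R := k)) ∘ₗ
      (TensorProduct.comm k H H).toLinearMap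

@[simp] lemma mSand_tmul (x b c : H) :
    (mSand x (b ⊗ₜ[k] c) : H) = c * x * HopfAlgebra.antipode (R := k) b := by
  simp [mSand]

/-- `Φ x y : a ⊗ b ⊗ c ⊗ d ↦ (c * x * S b) ⊗ (d * y * S a)`. -/
noncomputable def Φ (x y : H) : H ⊗[k] (H ⊗[k] (H ⊗[k] H)) →ₗ[k] H ⊗[k] H :=
  TensorProduct.map (mSand x) (mSand y) ∘ₗ perm

@[simp] lemma Φ_tmul (x y a b c d : H) :
    (Φ x y (a ⊗ₜ[k] (b ⊗ₜ[k] (c ⊗ₜ[k] d))) : H ⊗[k] H) =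
      (c * x * HopfAlgebra.antipode (R := k) b) ⊗ₜ[k]
        (d * y * HopfAlgebra.antipode (R := k) a) := by
  simp [Φ]

/-- `a ⊗ b ⊗ c ↦ (a * S b) ⊗ c`. -/
noncomputable def g3 : H ⊗[k] (H ⊗[k] H) →ₗ[k] H ⊗[k] H :=
  TensorProduct.map (LinearMap.mul' k H ∘ₗ LinearMap.lTensor H (HopfAlgebra.antipode (R := k)))
      LinearMap.id ∘ₗ (TensorProduct.assoc k H H H).symm.toLinearMap

@[simp] lemma g3_tmul (a b c : H) :
    (g3 (a ⊗ₜ[k] (b ⊗ₜ[k] c)) : H ⊗[k] H) =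
      (a * HopfAlgebra.antipode (R := k) b) ⊗ₜ[k] c := by
  simp [g3]

/-- `a ⊗ b ↦ b * a`. -/
noncomputable def mulFlip : H ⊗[k] H →ₗ[k] H :=
  LinearMap.mul' k H ∘ₗ (TensorProduct.comm k H H).toLinearMap

@[simp] lemma mulFlip_tmul (a b : H) : (mulFlip (a ⊗ₜ[k] b) : H) = b * a := by
  simp [mulFlip]

end maps

end SAYDaux

open Coalgebra TensorProduct

theorem adH_is_SAYD {k H : Type*} [Field k] [Ring H] [HopfAlgebra k H] :
    -- anti-Yetter–Drinfeld compatibility: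
    (∀ (h m : H) (r : Coalgebra.ReprBundled k h) (s : ∀ i : r.ι, Coalgebra.ReprBundled k (r.right i))
        (t : ∀ (i : r.ι) (j : (s i).ι), Coalgebra.ReprBundled k ((s i).left j))
        (q : Coalgebra.ReprBundled k m),
      Coalgebra.comul (R := k)
          (∑ i ∈ r.index, r.right i * m * HopfAlgebra.antipode (R := k) (r.left i)) =
        ∑ i ∈ r.index, ∑ j ∈ (s i).index, ∑ l ∈ (t i j).index, ∑ p ∈ q.index,
          ((t i j).right l * q.left p * HopfAlgebra.antipode (R := k) ((t i j).left l)) ⊗ₜ[k]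
            ((s i).right j * q.right p * HopfAlgebra.antipode (R := k) (r.left i)))
    ∧
    -- stability:
    (∀ (m : H) (q : Coalgebra.ReprBundled k m) (u : ∀ i : q.ι, Coalgebra.ReprBundled k (q.right i)),
      ∑ i ∈ q.index, ∑ j ∈ (u i).index,
          (u i).right j * q.left i * HopfAlgebra.antipode (R := k) ((u i).left j) = m) := by
  constructor
  · intro h m r s t q
    set w : (i : r.ι) → Coalgebra.ReprBundled k (r.left i) := fun i => SAYDaux.arbB k (r.left i) with hw
    have expand : ∀ i : r.ι,
        Coalgebra.comul (R := k) (r.right i * m * HopfAlgebra.antipode (R := k) (r.left i)) =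
          ∑ a ∈ (w i).index, ∑ p ∈ q.index, ∑ j ∈ (s i).index, ((s i).left j * q.left p * HopfAlgebra.antipode (R := k) ((w i).right a)) ⊗ₜ[k] ((s i).right j * q.right p * HopfAlgebra.antipode (R := k) ((w i).left a)) := by
      intro i
      rw [Bialgebra.comul_mul, Bialgebra.comul_mul, SAYDaux.comul_antipode_repr (w i),
        ← (s i).eq, ← q.eq]
      simp only [Finset.sum_mul, Finset.mul_sum, Algebra.TensorProduct.tmul_mul_tmul]
    have step1 : ∀ p : q.ι, SAYDaux.Φ (q.left p) (q.right p) (SAYDaux.Δ3 h) =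
        ∑ i ∈ r.index, ∑ a ∈ (w i).index, ∑ j ∈ (s i).index, ((s i).left j * q.left p * HopfAlgebra.antipode (R := k) ((w i).right a)) ⊗ₜ[k] ((s i).right j * q.right p * HopfAlgebra.antipode (R := k) ((w i).left a)) := by
      intro p
      rw [SAYDaux.P2 r w s]
      simp only [map_sum, SAYDaux.Φ_tmul]
    have step2 : ∀ p : q.ι, SAYDaux.Φ (q.left p) (q.right p) (SAYDaux.Δ3 h) =
        ∑ i ∈ r.index, ∑ j ∈ (s i).index, ∑ l ∈ (t i j).index, ((t i j).right l * q.left p * HopfAlgebra.antipode (R := k) ((t i j).left l)) ⊗ₜ[k] ((s i).right j * q.right p * HopfAlgebra.antipode (R := k) (r.left i)) := by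
      intro p
      rw [SAYDaux.P1 r s t]
      simp only [map_sum, SAYDaux.Φ_tmul]
    rw [map_sum]
    calc ∑ i ∈ r.index,
          Coalgebra.comul (R := k) (r.right i * m * HopfAlgebra.antipode (R := k) (r.left i))
        = ∑ i ∈ r.index, ∑ a ∈ (w i).index, ∑ p ∈ q.index, ∑ j ∈ (s i).index, ((s i).left j * q.left p * HopfAlgebra.antipode (R := k) ((w i).right a)) ⊗ₜ[k] ((s i).right j * q.right p * HopfAlgebra.antipode (R := k) ((w i).left a)) :=
          Finset.sum_congr rfl fun i _ => expand i
      _ = ∑ i ∈ r.index, ∑ p ∈ q.index, ∑ a ∈ (w i).index, ∑ j ∈ (s i).index, ((s i).left j * q.left p * HopfAlgebra.antipode (R := k) ((w i).right a)) ⊗ₜ[k] ((s i).right j * q.right p * HopfAlgebra.antipode (R := k) ((w i).left a)) :=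
          Finset.sum_congr rfl fun i _ => Finset.sum_comm
      _ = ∑ p ∈ q.index, ∑ i ∈ r.index, ∑ a ∈ (w i).index, ∑ j ∈ (s i).index, ((s i).left j * q.left p * HopfAlgebra.antipode (R := k) ((w i).right a)) ⊗ₜ[k] ((s i).right j * q.right p * HopfAlgebra.antipode (R := k) ((w i).left a)) := Finset.sum_comm
      _ = ∑ p ∈ q.index, SAYDaux.Φ (q.left p) (q.right p) (SAYDaux.Δ3 h) :=
          Finset.sum_congr rfl fun p _ => (step1 p).symm
      _ = ∑ p ∈ q.index, ∑ i ∈ r.index, ∑ j ∈ (s i).index, ∑ l ∈ (t i j).index, ((t i j).right l * q.left p * HopfAlgebra.antipode (R := k) ((t i j).left l)) ⊗ₜ[k] ((s i).right j * q.right p * HopfAlgebra.antipode (R := k) (r.left i)) :=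
          Finset.sum_congr rfl fun p _ => step2 p
      _ = ∑ i ∈ r.index, ∑ p ∈ q.index, ∑ j ∈ (s i).index, ∑ l ∈ (t i j).index, ((t i j).right l * q.left p * HopfAlgebra.antipode (R := k) ((t i j).left l)) ⊗ₜ[k] ((s i).right j * q.right p * HopfAlgebra.antipode (R := k) (r.left i)) := Finset.sum_comm
      _ = ∑ i ∈ r.index, ∑ j ∈ (s i).index, ∑ p ∈ q.index, ∑ l ∈ (t i j).index, ((t i j).right l * q.left p * HopfAlgebra.antipode (R := k) ((t i j).left l)) ⊗ₜ[k] ((s i).right j * q.right p * HopfAlgebra.antipode (R := k) (r.left i)) :=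
          Finset.sum_congr rfl fun i _ => Finset.sum_comm
      _ = ∑ i ∈ r.index, ∑ j ∈ (s i).index, ∑ l ∈ (t i j).index, ∑ p ∈ q.index, ((t i j).right l * q.left p * HopfAlgebra.antipode (R := k) ((t i j).left l)) ⊗ₜ[k] ((s i).right j * q.right p * HopfAlgebra.antipode (R := k) (r.left i)) :=
          Finset.sum_congr rfl fun i _ => Finset.sum_congr rfl fun j _ => Finset.sum_comm
  · intro m q u
    set r' := SAYDaux.arbB k m with hr'
    set w' : (i : r'.ι) → Coalgebra.ReprBundled k (r'.left i) := fun i => SAYDaux.arbB k (r'.left i) with hw'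
    have e1 : SAYDaux.g3 (SAYDaux.Δ2 m) = ∑ i ∈ q.index, ∑ j ∈ (u i).index,
        (q.left i * HopfAlgebra.antipode (R := k) ((u i).left j)) ⊗ₜ[k] (u i).right j := by
      rw [SAYDaux.P0 q u]
      simp only [map_sum, SAYDaux.g3_tmul]
    have e2 : SAYDaux.g3 (SAYDaux.Δ2 m) = (1 : H) ⊗ₜ[k] m := by
      rw [SAYDaux.Pleft r' w']
      simp only [map_sum, SAYDaux.g3_tmul]
      calc ∑ i ∈ r'.index, ∑ j ∈ (w' i).index,
            ((w' i).left j * HopfAlgebra.antipode (R := k) ((w' i).right j)) ⊗ₜ[k] r'.right i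
          = ∑ i ∈ r'.index,
              (algebraMap k H (Coalgebra.counit (r'.left i))) ⊗ₜ[k] r'.right i := by
            refine Finset.sum_congr rfl fun i _ => ?_
            rw [← TensorProduct.sum_tmul, SAYDaux.sum_mul_antipode_eqB (w' i)]
        _ = (1 : H) ⊗ₜ[k] m := by
            calc ∑ i ∈ r'.index,
                  (algebraMap k H (Coalgebra.counit (r'.left i))) ⊗ₜ[k] r'.right i
                = ∑ i ∈ r'.index,
                    (1 : H) ⊗ₜ[k] (Coalgebra.counit (R := k) (r'.left i) • r'.right i) := by
                  refine Finset.sum_congr rfl fun i _ => ?_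
                  rw [Algebra.algebraMap_eq_smul_one, TensorProduct.smul_tmul]
              _ = (1 : H) ⊗ₜ[k] m := by
                  rw [← TensorProduct.tmul_sum, SAYDaux.smul_sum_eq m r']
    have e3 := congrArg (SAYDaux.mulFlip (k := k) (H := H)) (e1.symm.trans e2)
    simp only [map_sum, SAYDaux.mulFlip_tmul, SAYDaux.mulFlip, LinearMap.comp_apply,
      LinearEquiv.coe_coe, TensorProduct.comm_tmul, LinearMap.mul'_apply, mul_one] at e3
    calc ∑ i ∈ q.index, ∑ j ∈ (u i).index,
          (u i).right j * q.left i * HopfAlgebra.antipode (R := k) ((u i).left j)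
        = ∑ i ∈ q.index, ∑ j ∈ (u i).index,
            (u i).right j * (q.left i * HopfAlgebra.antipode (R := k) ((u i).left j)) := by
          simp_rw [mul_assoc]
      _ = m := e3
end

section
/- Let G be a group with identity e and H ≤ G a subgroup. For n ≥ 0 let X_n := {(g₀, …, g_n) ∈ G^{n+1} : g₀H = g₁H = ⋯ = g_nH} and Y_n := {(h₀, …, h_n) ∈ H^{n+1} : h₀h₁⋯h_n = e} × G. Then the maps Φ_n: Y_n → X_n, (h₀, …, h_n; g) ↦ (g, gh₀, gh₀h₁, …, gh₀⋯h_{n-1}), and Ψ_n: X_n → Y_n, (g₀, …, g_n) ↦ (g₀⁻¹g₁, g₁⁻¹g₂, …, g_n⁻¹g₀; g₀), are mutually inverse bijections, and they intertwine the cocyclic structures: on X_n the cofaces δ_i(g₀,…,g_n) = (g₀,…,g_i,g_i,…,g_n), codegeneracies σ_i(g₀,…,g_n) = (g₀,…,g_{i-1},g_{i+1},…,g_n), and cocyclic operator τ_n(g₀,g₁,…,g_n) = (g₁,…,g_n,g₀); on Y_n the cofaces δ_i(h₀,…,h_{n-1};g) = (h₀,…,h_{i-1},e,h_i,…,h_{n-1};g),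 codegeneracies σ_i(h₀,…,h_n;g) = (h₀,…,h_ih_{i+1},…,h_n;g), and cocyclic operator τ_n(h₀,h₁,…,h_n;g) = (h₁,…,h_n,h₀; gh₀). -/
/-!
STATEMENT 15: For a group `G` with subgroup `H`, the fiber powers
`X_n = {(g₀,…,g_n) : g₀H = ⋯ = g_nH}` and the spaces
`Y_n = {(h₀,…,h_n) ∈ H^{n+1} : h₀⋯h_n = e} × G` are mutually inverse bijective via
`Φ(h₀,…,h_n;g) = (g, gh₀, gh₀h₁, …, gh₀⋯h_{n-1})` and
`Ψ(g₀,…,g_n) = (g₀⁻¹g₁, …, g_n⁻¹g₀; g₀)`, and these bijections intertwine the cocyclic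
structures (cofaces `δ`, codegeneracies `σ`, cocyclic operators `τ`) of the two sides.
-/

open scoped Pointwise

variable {G : Type*} [Group G] (H : Subgroup G)

/-- `X n`: tuples `(g₀,…,g_n)` with `g₀H = g₁H = ⋯ = g_nH`. -/
def cechSet (n : ℕ) : Set (Fin (n + 1) → G) :=
  {x | ∀ i, (QuotientGroup.mk (x i) : G ⧸ H) = QuotientGroup.mk (x 0)}

/-- `Y n`: pairs `((h₀,…,h_n), g)` with all `hᵢ ∈ H` and `h₀h₁⋯h_n = e`. -/
def fiberSet (n : ℕ) : Set ((Fin (n + 1) → G) × G) :=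
  {p | (∀ i, p.1 i ∈ H) ∧ (List.ofFn p.1).prod = 1}

/-- `Φ (h₀,…,h_n; g) = (g, gh₀, gh₀h₁, …, gh₀⋯h_{n-1})`. -/
def PhiMap (n : ℕ) (p : (Fin (n + 1) → G) × G) : Fin (n + 1) → G :=
  fun i => p.2 * ((List.ofFn p.1).take (i : ℕ)).prod

/-- `Ψ (g₀,…,g_n) = ((g₀⁻¹g₁, g₁⁻¹g₂, …, g_n⁻¹g₀), g₀)` (indices cyclic). -/
def PsiMap (n : ℕ) (x : Fin (n + 1) → G) : (Fin (n + 1) → G) × G :=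
  (fun i => (x i)⁻¹ * x (i + 1), x 0)

/-- Auxiliary: one-step recurrence for products of initial segments of `List.ofFn`. -/
private lemma takeProd_succ {m : ℕ} (h : Fin m → G) {k : ℕ} (hk : k < m) :
    ((List.ofFn h).take (k + 1)).prod = ((List.ofFn h).take k).prod * h ⟨k, hk⟩ := by
  rw [List.prod_take_succ _ _ (by simpa using hk)]
  congr 1
  simp

private lemma takeProd_all {m : ℕ} (h : Fin m → G) :
    ((List.ofFn h).take m).prod = (List.ofFn h).prod := by
  rw [List.take_of_length_le (by simp)]

private lemma fin_mk_add_one {n k : ℕ} (hk : k < n) :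
    ((⟨k, by omega⟩ : Fin (n + 1)) + 1) = ⟨k + 1, by omega⟩ := by
  apply Fin.ext
  rw [Fin.val_add_one_of_lt (by simp [Fin.lt_def]; omega)]

/-- Telescoping for the `Ψ`-tuple. -/
private lemma tele {n : ℕ} (x : Fin (n + 1) → G) {k : ℕ} (hk : k ≤ n) :
    ((List.ofFn fun i : Fin (n + 1) => (x i)⁻¹ * x (i + 1)).take k).prod
      = (x 0)⁻¹ * x ⟨k, by omega⟩ := by
  induction k with
  | zero =>
      simp only [List.take_zero, List.prod_nil]
      rw [show (⟨0, by omega⟩ : Fin (n + 1)) = 0 from rfl, inv_mul_cancel]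
  | succ k ih =>
      rw [takeProd_succ _ (show k < n + 1 by omega), ih (by omega),
        fin_mk_add_one (show k < n by omega)]
      group

theorem cech_fiber_cocyclic_iso (n : ℕ) :
    -- mutually inverse bijections
    Set.MapsTo (PhiMap n) (fiberSet H n) (cechSet H n) ∧
    Set.MapsTo (PsiMap n) (cechSet H n) (fiberSet H n) ∧
    (∀ p ∈ fiberSet H n, PsiMap n (PhiMap n p) = p) ∧
    (∀ x ∈ cechSet H n, PhiMap n (PsiMap n x) = x) ∧
    -- cofaces: `δᵢ` duplicates `gᵢ` on `X`, inserts `e` at slot `i` on `Y`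
    (∀ (i : Fin (n + 1)), ∀ p ∈ fiberSet H n,
      PhiMap (n + 1) (Fin.insertNth i.castSucc (1 : G) p.1, p.2)
        = (PhiMap n p) ∘ (Fin.predAbove i)) ∧
    -- codegeneracies: `σᵢ` multiplies `hᵢhᵢ₊₁` on `Y`; on `X` it deletes an entry
    (∀ (i : Fin (n + 1)), ∀ p ∈ fiberSet H (n + 1),
      PhiMap n
        ((fun j : Fin (n + 1) =>
            if (j : ℕ) < (i : ℕ) then p.1 j.castSucc
            else if j = i then p.1 i.castSucc * p.1 i.succ
            else p.1 j.succ), p.2)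
        = (PhiMap (n + 1) p) ∘ (Fin.succAbove i.succ)) ∧
    -- cocyclic operators: `τ(h₀,…,h_n;g) = (h₁,…,h_n,h₀; gh₀)`, `τ(g₀,…,g_n) = (g₁,…,g_n,g₀)`
    (∀ p ∈ fiberSet H n,
      PhiMap n (fun i => p.1 (i + 1), p.2 * p.1 0)
        = fun i => PhiMap n p (i + 1)) := by
  refine ⟨?_, ?_, ?_, ?_, ?_, ?_, ?_⟩
  · -- Φ maps fiberSet to cechSet
    rintro ⟨h, g⟩ ⟨hm, -⟩ i
    have ht : ((List.ofFn h).take (i : ℕ)).prod ∈ H := by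
      refine H.list_prod_mem fun x hx => ?_
      obtain ⟨j, rfl⟩ := List.mem_ofFn.mp (List.mem_of_mem_take hx)
      exact hm j
    simp only [PhiMap, Fin.val_zero, List.take_zero, List.prod_nil, mul_one]
    rw [QuotientGroup.eq]
    simpa [mul_assoc] using H.inv_mem ht
  · -- Ψ maps cechSet to fiberSet
    intro x hx
    have hx' : ∀ i, (QuotientGroup.mk (x i) : G ⧸ H) = QuotientGroup.mk (x 0) := hx
    constructor
    · intro i
      exact QuotientGroup.eq.mp ((hx' i).trans (hx' (i + 1)).symm)
    · show (List.ofFn fun i : Fin (n + 1) => (x i)⁻¹ * x (i + 1)).prod = 1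
      rw [← takeProd_all, takeProd_succ _ (Nat.lt_succ_self n), tele x (le_refl n),
        show (⟨n, Nat.lt_succ_self n⟩ : Fin (n + 1)) = Fin.last n from rfl,
        Fin.last_add_one]
      group
  · -- Ψ ∘ Φ = id
    rintro ⟨h, g⟩ ⟨hm, hprod⟩
    refine Prod.ext ?_ ?_
    · funext i
      simp only [PsiMap, PhiMap]
      rcases Nat.lt_or_ge (i : ℕ) n with hi | hi
      · have hv : ((i + 1 : Fin (n + 1)) : ℕ) = (i : ℕ) + 1 :=
          Fin.val_add_one_of_lt (show i < Fin.last n from (by exact hi))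
        rw [hv, takeProd_succ _ (by omega)]
        simp only [Fin.eta]
        group
      · have hi' : i = Fin.last n := Fin.ext (le_antisymm (Nat.lt_succ_iff.mp i.isLt) hi)
        subst hi'
        have hT : ((List.ofFn h).take n).prod = (h (Fin.last n))⁻¹ := by
          have h2 := takeProd_succ h (Nat.lt_succ_self n)
          rw [takeProd_all, hprod] at h2
          rw [show (⟨n, Nat.lt_succ_self n⟩ : Fin (n + 1)) = Fin.last n from rfl] at h2
          exact eq_inv_of_mul_eq_one_left h2.symm
        rw [Fin.last_add_one]
        simp only [Fin.val_zero, List.take_zero, List.prod_nil, mul_one, Fin.val_last]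
        rw [hT]
        group
    · simp [PsiMap, PhiMap]
  · -- Φ ∘ Ψ = id
    intro x hx
    funext i
    simp only [PhiMap, PsiMap]
    rw [tele x (Nat.lt_succ_iff.mp i.isLt)]
    simp only [Fin.eta]
    exact mul_inv_cancel_left _ _
  · -- cofaces
    rintro i ⟨h, g⟩ ⟨hm, hprod⟩
    have key : ∀ k, k ≤ n + 2 →
        ((List.ofFn (Fin.insertNth i.castSucc (1 : G) h)).take k).prod
          = ((List.ofFn h).take (if k ≤ (i : ℕ) then k else k - 1)).prod := by
      intro k hk
      induction k with
      | zero => simp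
      | succ k ih =>
        rw [takeProd_succ _ (show k < n + 2 by omega), ih (by omega)]
        rcases lt_trichotomy k (i : ℕ) with hki | hki | hki
        · have h1 : (⟨k, show k < n + 2 by omega⟩ : Fin (n + 2))
              = i.castSucc.succAbove ⟨k, by omega⟩ := by
            rw [Fin.succAbove_of_castSucc_lt _ _
              (show Fin.castSucc ⟨k, by omega⟩ < i.castSucc from (by exact hki))]
            exact (Fin.castSucc_mk ..).symm
          rw [h1, Fin.insertNth_apply_succAbove, if_pos (show k ≤ (i : ℕ) by omega),
            if_pos (show k + 1 ≤ (i : ℕ) by omega), takeProd_succ _ (show k < n + 1 by omega)]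
        · have h1 : (⟨k, show k < n + 2 by omega⟩ : Fin (n + 2)) = i.castSucc :=
            Fin.ext (by exact hki)
          rw [h1, Fin.insertNth_apply_same, mul_one, if_pos (show k ≤ (i : ℕ) by omega),
            if_neg (show ¬ k + 1 ≤ (i : ℕ) by omega)]
          congr 1
        · have h1 : (⟨k, show k < n + 2 by omega⟩ : Fin (n + 2))
              = i.castSucc.succAbove ⟨k - 1, by omega⟩ := by
            rw [Fin.succAbove_of_le_castSucc _ _
              (show i.castSucc ≤ Fin.castSucc ⟨k - 1, by omega⟩ from
                ((by omega : (i : ℕ) ≤ k - 1)))]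
            apply Fin.ext
            rw [Fin.succ_mk]
            show k = k - 1 + 1
            omega
          rw [h1, Fin.insertNth_apply_succAbove, if_neg (show ¬ k ≤ (i : ℕ) by omega),
            if_neg (show ¬ k + 1 ≤ (i : ℕ) by omega),
            show k + 1 - 1 = (k - 1) + 1 by omega, takeProd_succ _ (show k - 1 < n + 1 by omega)]
    funext j
    simp only [PhiMap, Function.comp_apply]
    rw [key (j : ℕ) (by omega)]
    have hidx : (if (j : ℕ) ≤ (i : ℕ) then (j : ℕ) else (j : ℕ) - 1)
        = ((Fin.predAbove i j : Fin (n + 1)) : ℕ) := by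
      rcases le_or_gt (j : ℕ) (i : ℕ) with hj | hj
      · rw [if_pos hj, Fin.predAbove_of_le_castSucc _ _ (by exact hj), Fin.coe_castPred]
      · rw [if_neg (by omega), Fin.predAbove_of_castSucc_lt _ _ (by exact hj), Fin.coe_pred]
    rw [hidx]
  · -- codegeneracies
    rintro i ⟨h, g⟩ ⟨hm, hprod⟩
    have key : ∀ k, k ≤ n + 1 →
        ((List.ofFn fun j : Fin (n + 1) =>
            if (j : ℕ) < (i : ℕ) then h j.castSucc
            else if j = i then h i.castSucc * h i.succ
            else h j.succ).take k).prod
          = ((List.ofFn h).take (if k ≤ (i : ℕ) then k else k + 1)).prod := by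
      intro k hk
      induction k with
      | zero => simp
      | succ k ih =>
        rw [takeProd_succ _ (show k < n + 1 by omega), ih (by omega)]
        rcases lt_trichotomy k (i : ℕ) with hki | hki | hki
        · rw [if_pos (show ((⟨k, (by omega : k < n + 1)⟩ : Fin (n + 1)) : ℕ) < (i : ℕ) from hki),
            if_pos (show k ≤ (i : ℕ) by omega), if_pos (show k + 1 ≤ (i : ℕ) by omega),
            takeProd_succ _ (show k < n + 2 by omega), Fin.castSucc_mk]
        · rw [if_neg (show ¬ ((⟨k, (by omega : k < n + 1)⟩ : Fin (n + 1)) : ℕ) < (i : ℕ) from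
              ((by omega : ¬ k < (i : ℕ)))),
            if_pos (show (⟨k, (by omega : k < n + 1)⟩ : Fin (n + 1)) = i from
              Fin.ext (show k = (i : ℕ) from hki)),
            if_pos (show k ≤ (i : ℕ) by omega), if_neg (show ¬ k + 1 ≤ (i : ℕ) by omega),
            takeProd_succ _ (show k + 1 < n + 2 by omega),
            takeProd_succ _ (show k < n + 2 by omega), mul_assoc,
            show i.castSucc = (⟨k, (by omega : k < n + 2)⟩ : Fin (n + 2)) from
              Fin.ext (by rw [Fin.coe_castSucc]; exact hki.symm),
            show i.succ = (⟨k + 1, (by omega : k + 1 < n + 2)⟩ : Fin (n + 2)) from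
              Fin.ext (by rw [Fin.val_succ]; exact ((by omega : (i : ℕ) + 1 = k + 1)))]
        · rw [if_neg (show ¬ ((⟨k, (by omega : k < n + 1)⟩ : Fin (n + 1)) : ℕ) < (i : ℕ) from
              ((by omega : ¬ k < (i : ℕ)))),
            if_neg (show ¬ (⟨k, (by omega : k < n + 1)⟩ : Fin (n + 1)) = i from
              fun hh => absurd (congrArg Fin.val hh) ((by omega : ¬ k = (i : ℕ)))),
            if_neg (show ¬ k ≤ (i : ℕ) by omega), if_neg (show ¬ k + 1 ≤ (i : ℕ) by omega),
            takeProd_succ _ (show k + 1 < n + 2 by omega), Fin.succ_mk]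
    funext j
    simp only [PhiMap, Function.comp_apply]
    rw [key (j : ℕ) (by omega)]
    have hidx : (if (j : ℕ) ≤ (i : ℕ) then (j : ℕ) else (j : ℕ) + 1)
        = ((Fin.succAbove i.succ j : Fin (n + 2)) : ℕ) := by
      rcases le_or_gt (j : ℕ) (i : ℕ) with hj | hj
      · rw [if_pos hj, Fin.succAbove_of_castSucc_lt _ _
          (show j.castSucc < i.succ from ((by omega : (j : ℕ) < (i : ℕ) + 1))), Fin.coe_castSucc]
      · rw [if_neg (by omega), Fin.succAbove_of_le_castSucc _ _
          (show i.succ ≤ j.castSucc from ((by omega : (i : ℕ) + 1 ≤ (j : ℕ)))), Fin.val_succ]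
    rw [hidx]
  · -- cocyclic operator
    rintro ⟨h, g⟩ ⟨hm, hprod⟩
    have key : ∀ k, k ≤ n →
        ((List.ofFn fun i : Fin (n + 1) => h (i + 1)).take k).prod
          = (h 0)⁻¹ * ((List.ofFn h).take (k + 1)).prod := by
      intro k hk
      induction k with
      | zero =>
        rw [takeProd_succ _ (Nat.succ_pos n)]
        simp [show (⟨0, Nat.succ_pos n⟩ : Fin (n + 1)) = 0 from rfl]
      | succ k ih =>
        rw [takeProd_succ _ (show k < n + 1 by omega), ih (by omega),
          fin_mk_add_one (show k < n by omega),
          takeProd_succ _ (show k + 1 < n + 1 by omega), mul_assoc]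
    funext j
    simp only [PhiMap]
    rw [key (j : ℕ) (by omega)]
    rcases Nat.lt_or_ge (j : ℕ) n with hj | hj
    · rw [Fin.val_add_one_of_lt (show j < Fin.last n from (by exact hj))]
      group
    · have hj' : j = Fin.last n := Fin.ext (le_antisymm (Nat.lt_succ_iff.mp j.isLt) hj)
      subst hj'
      rw [Fin.last_add_one]
      simp only [Fin.val_last, Fin.val_zero, List.take_zero, List.prod_nil, mul_one]
      rw [takeProd_all, hprod]
      group
end
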